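/- arXiv:1112.0800 — 2 statements merged into one kernel-verified Lean document; each statement's English description precedes it below -/
import Mathlib

section
/- Let G be a non-planar graph with two vertices x, y such that splitting x into x1,x2 and y into y1,y2 yields a planar graph with x1, x2, y1, y2 on a common face. Then the graph obtained from G by identifying x and y (and simplifying) is planar. -/
open SimpleGraph

namespace AltPaper

variable {V : Type*} {W : Type*} {U : Type*}

/-- The dart-reversal permutation of a graph. -/
def dartRev (G : SimpleGraph V) : Equiv.Perm G.Dart :=
  Function.Involutive.toPerm SimpleGraph.Dart.symm SimpleGraph.Dart.symm_involutive

/-- A combinatorial embedding of `G` into an orientable surface, given by a rotation system: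
a permutation of the darts whose orbits are exactly the stars of the vertices. -/
structure RotSys (G : SimpleGraph V) where
  rot : Equiv.Perm G.Dart
  fst_rot : ∀ d : G.Dart, (rot d).fst = d.fst
  orbit_full : ∀ d d' : G.Dart, d.fst = d'.fst → ∃ n : ℕ, (rot ^ n) d = d'

namespace RotSys

variable {G : SimpleGraph V}

/-- The face-tracing permutation of the rotation system. -/
def facePerm (R : RotSys G) : Equiv.Perm G.Dart := (dartRev G).trans R.rot

/-- The number of faces of the embedding: the number of orbits of the face permutation. -/
noncomputable def numFaces (R : RotSys G) : ℕ :=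
  Nat.card (MulAction.orbitRel.Quotient (Subgroup.zpowers R.facePerm) G.Dart)

/-- The number of non-isolated vertices: orbits of the rotation. -/
noncomputable def numVerts (R : RotSys G) : ℕ :=
  Nat.card (MulAction.orbitRel.Quotient (Subgroup.zpowers R.rot) G.Dart)

/-- The number of connected components containing at least one edge. -/
noncomputable def numComps (R : RotSys G) : ℕ :=
  Nat.card (MulAction.orbitRel.Quotient (Subgroup.closure {R.rot, dartRev G}) G.Dart)

/-- By Euler's formula, the (total, orientable) genus of the embedding `R` is at most `k`.
Isolated vertices are irrelevant for the genus and are ignored. -/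
noncomputable def genusLE (R : RotSys G) (k : ℕ) : Prop :=
  2 * R.numComps + Nat.card G.edgeSet ≤ 2 * k + R.numFaces + R.numVerts

/-- Vertices `v₁ v₂ v₃ v₄` appear (in this cyclic order) on a common face of `R`. -/
def cyclicOrderedFace (R : RotSys G) (v₁ v₂ v₃ v₄ : V) : Prop :=
  ∃ (d : G.Dart) (a b c : ℕ), 0 < a ∧ a < b ∧ b < c ∧
    c < Function.minimalPeriod (⇑R.facePerm) d ∧
    d.fst = v₁ ∧ ((R.facePerm ^ a) d).fst = v₂ ∧ ((R.facePerm ^ b) d).fst = v₃ ∧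
    ((R.facePerm ^ c) d).fst = v₄

/-- There is a face of `R` in which `x` and `y` appear (at least) twice, in the alternating
cyclic order `x, y, x, y`. -/
def altFace (R : RotSys G) (x y : V) : Prop := R.cyclicOrderedFace x y x y

/-- `u` and `v` lie on a common face of `R`. -/
def Cofacial (R : RotSys G) (u v : V) : Prop :=
  ∃ (d : G.Dart) (n : ℕ), d.fst = u ∧ ((R.facePerm ^ n) d).fst = v

/-- All vertices of `s` lie on a common face of `R`. -/
def CofacialSet (R : RotSys G) (s : Set V) : Prop :=
  ∃ d : G.Dart, ∀ v ∈ s, ∃ n : ℕ, ((R.facePerm ^ n) d).fst = v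

end RotSys

/-- `G` embeds in the orientable surface of genus `k`. -/
def GenusLE (G : SimpleGraph V) (k : ℕ) : Prop := ∃ R : RotSys G, R.genusLE k

/-- `G` has an embedding in the orientable surface of genus `k` with a face in which the
vertices `x` and `y` appear twice, in alternating cyclic order. -/
def AltEmb (G : SimpleGraph V) (x y : V) (k : ℕ) : Prop :=
  ∃ R : RotSys G, R.genusLE k ∧ R.altFace x y

end AltPaper
namespace AltPaper

variable {V : Type*} {W : Type*} {U : Type*}

/-- A combinatorial embedding of `G` into a (possibly non-orientable) surface:
a rotation system together with a signature on the edges. -/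
structure SRS (G : SimpleGraph V) where
  rot : Equiv.Perm G.Dart
  fst_rot : ∀ d : G.Dart, (rot d).fst = d.fst
  orbit_full : ∀ d d' : G.Dart, d.fst = d'.fst → ∃ n : ℕ, (rot ^ n) d = d'
  sign : Sym2 V → Bool

namespace SRS

variable {G : SimpleGraph V}

/-- Auxiliary involution used in signed face tracing: reverse the dart and update the side. -/
def flip (S : SRS G) : Equiv.Perm (G.Dart × Bool) :=
  Function.Involutive.toPerm (fun p => (p.1.symm, xor p.2 (S.sign p.1.edge)))
    (by
      rintro ⟨d, s⟩
      have h1 : d.symm.symm = d := SimpleGraph.Dart.symm_involutive d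
      have h2 : d.symm.edge = d.edge := SimpleGraph.Dart.edge_symm d
      simp [h1, h2, Bool.xor_assoc])

/-- Auxiliary permutation used in signed face tracing: apply the rotation forwards or
backwards according to the current side. -/
def rotPm (S : SRS G) : Equiv.Perm (G.Dart × Bool) where
  toFun p := (cond p.2 (S.rot p.1) (S.rot.symm p.1), p.2)
  invFun p := (cond p.2 (S.rot.symm p.1) (S.rot p.1), p.2)
  left_inv := by rintro ⟨d, (_ | _)⟩ <;> simp
  right_inv := by rintro ⟨d, (_ | _)⟩ <;> simp

/-- The signed face-tracing permutation, acting on sided darts. -/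
def facePerm (S : SRS G) : Equiv.Perm (G.Dart × Bool) := (S.flip).trans (S.rotPm)

/-- Twice the number of faces (each face is traced once on each side). -/
noncomputable def numFaces2 (S : SRS G) : ℕ :=
  Nat.card (MulAction.orbitRel.Quotient (Subgroup.zpowers S.facePerm) (G.Dart × Bool))

noncomputable def numVerts (S : SRS G) : ℕ :=
  Nat.card (MulAction.orbitRel.Quotient (Subgroup.zpowers S.rot) G.Dart)

noncomputable def numComps (S : SRS G) : ℕ :=
  Nat.card (MulAction.orbitRel.Quotient (Subgroup.closure {S.rot, dartRev G}) G.Dart)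

/-- Twice the (total) Euler genus of the embedding, via Euler's formula. -/
noncomputable def eulerGenus2 (S : SRS G) : ℤ :=
  4 * S.numComps - 2 * S.numVerts + 2 * Nat.card G.edgeSet - S.numFaces2

/-- The Euler genus of the embedding is at most `h`. -/
noncomputable def eulerGenusLE (S : SRS G) (h : ℕ) : Prop := S.eulerGenus2 ≤ 2 * h

/-- The sided darts `p` and `q` lie on the same face. -/
def SameFace (S : SRS G) (p q : G.Dart × Bool) : Prop := ∃ n : ℤ, (S.facePerm ^ n) p = q

/-- The set of darts of the facial walk of the face of `p`. -/
def faceDarts (S : SRS G) (p : G.Dart × Bool) : Set G.Dart :=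
  {d | ∃ q, S.SameFace p q ∧ q.1 = d}

/-- The vertex `v` appears on the facial walk of the face of `p`. -/
def vertexOnFace (S : SRS G) (p : G.Dart × Bool) (v : V) : Prop :=
  ∃ d ∈ S.faceDarts p, d.fst = v

/-- The facial walk of the face of `p` visits `x` and `y` in alternating cyclic order
`x, y, x, y`. -/
def altFaceS (S : SRS G) (p : G.Dart × Bool) (x y : V) : Prop :=
  ∃ (a b c : ℕ), 0 < a ∧ a < b ∧ b < c ∧
    c < Function.minimalPeriod (⇑S.facePerm) p ∧
    p.1.fst = x ∧ ((S.facePerm ^ a) p).1.fst = y ∧ ((S.facePerm ^ b) p).1.fst = x ∧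
    ((S.facePerm ^ c) p).1.fst = y

end SRS

/-- `G` embeds in the projective plane. -/
def ProjPlanar (G : SimpleGraph V) : Prop := ∃ S : SRS G, S.eulerGenusLE 1

end AltPaper
namespace AltPaper

variable {V : Type*} {W : Type*} {U : Type*}

/-! ### The multigraph obtained by identifying two vertices, and its planar embeddings -/

/-- The darts of the multigraph `Ĥ` obtained from `G` by identifying `x` and `y`
(deleting the edge `xy` first, if present). -/
def PD (G : SimpleGraph V) (x y : V) : Type _ := {d : G.Dart // d.edge ≠ s(x, y)}

/-- The source vertex of a dart of `Ĥ`: the identified vertex `v_{xy}` is represented by `x`. -/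
def psrc (G : SimpleGraph V) (x y : V) [DecidableEq V] (d : PD G x y) : V :=
  if d.val.fst = y then x else d.val.fst

/-- Dart reversal in `Ĥ`. -/
def prev (G : SimpleGraph V) (x y : V) : Equiv.Perm (PD G x y) :=
  Function.Involutive.toPerm
    (fun d => ⟨d.val.symm, by rw [SimpleGraph.Dart.edge_symm]; exact d.prop⟩)
    (by
      rintro ⟨d, hd⟩
      exact Subtype.ext (SimpleGraph.Dart.symm_involutive d))

/-- A combinatorial embedding (in an orientable surface) of the multigraph `Ĥ` obtained from
`G` by identifying `x` and `y` into the vertex `v_{xy}` (loops are discarded). -/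
structure PinchRS (G : SimpleGraph V) (x y : V) [DecidableEq V] where
  rot : Equiv.Perm (PD G x y)
  src_rot : ∀ d, psrc G x y (rot d) = psrc G x y d
  orbit_full : ∀ d d', psrc G x y d = psrc G x y d' → ∃ n : ℕ, (rot ^ n) d = d'

namespace PinchRS

variable [DecidableEq V] {G : SimpleGraph V} {x y : V}

def facePerm (P : PinchRS G x y) : Equiv.Perm (PD G x y) := (prev G x y).trans P.rot

noncomputable def numFaces (P : PinchRS G x y) : ℕ :=
  Nat.card (MulAction.orbitRel.Quotient (Subgroup.zpowers P.facePerm) (PD G x y))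

noncomputable def numVerts (P : PinchRS G x y) : ℕ :=
  Nat.card (MulAction.orbitRel.Quotient (Subgroup.zpowers P.rot) (PD G x y))

noncomputable def numComps (P : PinchRS G x y) : ℕ :=
  Nat.card (MulAction.orbitRel.Quotient (Subgroup.closure {P.rot, prev G x y}) (PD G x y))

/-- The embedding `P` of `Ĥ` is planar (Euler's formula; the dart count is twice the
edge count). -/
noncomputable def Planar (P : PinchRS G x y) : Prop :=
  4 * P.numComps + Nat.card (PD G x y) ≤ 2 * P.numFaces + 2 * P.numVerts

/-- The number of label transitions in the cyclic sequence of labels around the identified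
vertex `v_{xy}`: a dart incident with `v_{xy}` is labelled `X` when it comes from `x`. -/
noncomputable def pinchTrans (P : PinchRS G x y) : ℕ :=
  Nat.card {d : PD G x y // psrc G x y d = x ∧
    ¬ ((d.val.fst = x) ↔ ((P.rot d).val.fst = x))}

end PinchRS

/-! ### Splitting the two terminals -/

/-- The projection recording that `Sum.inr false` is the second copy of `x` and
`Sum.inr true` is the second copy of `y` (while `Sum.inl x`, `Sum.inl y` are the first
copies). -/
def splitProj (x y : V) : V ⊕ Bool → V
  | Sum.inl v => v
  | Sum.inr false => x
  | Sum.inr true => y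

/-- `G'` is obtained from `G` by splitting `x` into `x₁ = Sum.inl x`, `x₂ = Sum.inr false`
and `y` into `y₁ = Sum.inl y`, `y₂ = Sum.inr true`, distributing the incident edges. -/
def IsSplitAt (G : SimpleGraph V) (x y : V) (G' : SimpleGraph (V ⊕ Bool)) : Prop :=
  (∀ a b, G'.Adj a b → G.Adj (splitProj x y a) (splitProj x y b)) ∧
  (∀ u v, G.Adj u v → ∃ a b, G'.Adj a b ∧ splitProj x y a = u ∧ splitProj x y b = v) ∧
  (∀ a b a' b', G'.Adj a b → G'.Adj a' b' →
    splitProj x y a = splitProj x y a' → splitProj x y b = splitProj x y b' → a = a' ∧ b = b')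

/-- The simple graph `G/xy` obtained from `G` by identifying `x` and `y` (the edge `xy`,
if present, is deleted first, and multiple edges are merged); the merged vertex is `x`,
and `y` becomes isolated. -/
def pinch (G : SimpleGraph V) (x y : V) : SimpleGraph V :=
  SimpleGraph.fromRel (fun a b => a ≠ y ∧ b ≠ y ∧
    ∃ a' b', G.Adj a' b' ∧ (a' = a ∨ (a' = y ∧ a = x)) ∧ (b' = b ∨ (b' = y ∧ b = x)))

/-- The graph `G*`: the `xy`-sum of `G` with a copy of `K₅` minus an edge, the two ends of
the deleted edge being identified with `x` and `y`. -/
def Gstar (G : SimpleGraph V) (x y : V) : SimpleGraph (V ⊕ Fin 3) :=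
  SimpleGraph.fromRel (fun a b =>
    (∃ u v, a = Sum.inl u ∧ b = Sum.inl v ∧ G.Adj u v) ∨
    (∃ i j : Fin 3, a = Sum.inr i ∧ b = Sum.inr j) ∨
    (∃ i : Fin 3, a = Sum.inr i ∧ (b = Sum.inl x ∨ b = Sum.inl y)))

/-- The two-terminal graph corresponding to an `XY`-labelled graph `H`:
add the terminal `x = Sum.inr false` joined to all `X`-labelled vertices and the terminal
`y = Sum.inr true` joined to all `Y`-labelled vertices. -/
def termGraph (H : SimpleGraph W) (lX lY : W → Prop) : SimpleGraph (W ⊕ Bool) :=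
  SimpleGraph.fromRel (fun a b =>
    (∃ u v, a = Sum.inl u ∧ b = Sum.inl v ∧ H.Adj u v) ∨
    (∃ u, a = Sum.inr false ∧ b = Sum.inl u ∧ lX u) ∨
    (∃ u, a = Sum.inr true ∧ b = Sum.inl u ∧ lY u))

/-- Identification map used for `xy`-sums: `w₁ ↦ u₁`, `w₂ ↦ u₂`. -/
def sumRho [DecidableEq W] (u₁ u₂ : U) (w₁ w₂ : W) : W → U ⊕ W := fun w =>
  if w = w₁ then Sum.inl u₁ else if w = w₂ then Sum.inl u₂ else Sum.inr w

/-- The `xy`-sum of `H₁` (with terminals `u₁, u₂`) and `H₂` (with terminals `w₁, w₂`):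
their union after identifying `u₁` with `w₁` and `u₂` with `w₂`; the edge between the two
identified vertices is deleted even if present in a summand. -/
def xySum [DecidableEq W] (H₁ : SimpleGraph U) (u₁ u₂ : U)
    (H₂ : SimpleGraph W) (w₁ w₂ : W) : SimpleGraph (U ⊕ W) :=
  SimpleGraph.fromRel (fun p q => s(p, q) ≠ s(Sum.inl u₁, Sum.inl u₂) ∧
    ((∃ a b, p = Sum.inl a ∧ q = Sum.inl b ∧ H₁.Adj a b) ∨
     (∃ a b, H₂.Adj a b ∧ p = sumRho u₁ u₂ w₁ w₂ a ∧ q = sumRho u₁ u₂ w₁ w₂ b)))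

/-! ### Subdivisions -/

/-- A subdivision of `K` contained in `G`: branch vertices are given by the injection `f`,
branches are internally disjoint paths avoiding the branch vertices. -/
structure SubdivisionEmb (K : SimpleGraph U) (G : SimpleGraph V) where
  f : U → V
  inj : Function.Injective f
  walk : ∀ {a b : U}, K.Adj a b → G.Walk (f a) (f b)
  isPath : ∀ {a b : U} (h : K.Adj a b), (walk h).IsPath
  symmCompat : ∀ {a b : U} (h : K.Adj a b), walk h.symm = (walk h).reverse
  internal_disj : ∀ {a b c d : U} (h₁ : K.Adj a b) (h₂ : K.Adj c d), s(a, b) ≠ s(c, d) →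
    ∀ v, v ∈ (walk h₁).support → v ∈ (walk h₂).support →
      (v = f a ∨ v = f b) ∧ (v = f c ∨ v = f d)
  branch_only : ∀ {a b : U} (h : K.Adj a b) (u : U), f u ∈ (walk h).support → u = a ∨ u = b

/-- The set of vertices of the subdivision. -/
def SubSupport {K : SimpleGraph U} {G : SimpleGraph V} (s : SubdivisionEmb K G) : Set V :=
  {v | ∃ (a b : U) (h : K.Adj a b), v ∈ (s.walk h).support}

/-- The set of edges of the subdivision. -/
def SubEdges {K : SimpleGraph U} {G : SimpleGraph V} (s : SubdivisionEmb K G) : Set (Sym2 V) :=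
  {e | ∃ (a b : U) (h : K.Adj a b), e ∈ (s.walk h).edges}

/-! ### Blocks -/

/-- `B` is a block of `H`: a maximal connected vertex set without cutvertex. -/
def IsBlock (H : SimpleGraph W) (B : Set W) : Prop :=
  B.Nonempty ∧ (H.induce B).Preconnected ∧ (∀ v : W, (H.induce (B \ {v})).Preconnected) ∧
  ∀ B' : Set W, B ⊆ B' →
    ((H.induce B').Preconnected ∧ ∀ v : W, (H.induce (B' \ {v})).Preconnected) → B' = B

/-! ### Bridges of a cycle -/

/-- The `C`-bridge generated by a set `K` of vertices (the component) : `K` together with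
all edges leaving `K` and their endpoints. -/
def bridgeOf (G : SimpleGraph V) (K : Set V) : G.Subgraph where
  verts := K ∪ {v | ∃ u ∈ K, G.Adj u v}
  Adj a b := G.Adj a b ∧ (a ∈ K ∨ b ∈ K)
  adj_sub h := h.1
  edge_vert := by
    rintro a b ⟨h, ha | hb⟩
    · exact Or.inl ha
    · exact Or.inr ⟨b, hb, h.symm⟩
  symm := by
    constructor
    rintro a b ⟨h, hab⟩
    exact ⟨h.symm, hab.symm⟩

/-- `B` is a `C`-bridge in `G`, for a closed walk `C`: either a chord of `C`, or a connected
component of `G - V(C)` together with all edges joining it to `C`. -/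
def IsCBridge {r : V} (G : SimpleGraph V) (C : G.Walk r r) (B : G.Subgraph) : Prop :=
  (∃ (a b : V) (h : G.Adj a b), a ∈ C.support ∧ b ∈ C.support ∧ s(a, b) ∉ C.edges ∧
      B = G.subgraphOfAdj h) ∨
  (∃ c : (G.induce {v | v ∉ C.support}).ConnectedComponent,
      B = bridgeOf G (Subtype.val '' c.supp))

/-- The attachments of a `C`-bridge `B`. -/
def attachments {G : SimpleGraph V} {r : V} (C : G.Walk r r) (B : G.Subgraph) : Set V :=
  B.verts ∩ {v | v ∈ C.support}

/-- The vertex set of the segment `C[u,v]` of the closed walk `C` from `u` to `v` (in the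
orientation of `C`). -/
def segSet [DecidableEq V] {r : V} (G : SimpleGraph V) (C : G.Walk r r) (u v : V) : Set V :=
  {w | ∃ (hu : u ∈ C.support) (hv : v ∈ (C.rotate u hu).support),
    w ∈ ((C.rotate u hu).takeUntil v hv).support}

/-- Two `C`-bridges avoid each other. -/
def Avoid [DecidableEq V] {r : V} (G : SimpleGraph V) (C : G.Walk r r)
    (B₁ B₂ : G.Subgraph) : Prop :=
  ∃ u v, u ∈ C.support ∧ v ∈ C.support ∧
    attachments C B₁ ⊆ segSet G C u v ∧ attachments C B₂ ⊆ segSet G C v u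

/-- Two `C`-bridges overlap. -/
def Overlap [DecidableEq V] {r : V} (G : SimpleGraph V) (C : G.Walk r r)
    (B₁ B₂ : G.Subgraph) : Prop := ¬ Avoid G C B₁ B₂

/-! ### The classes `A^k_{xy}` and their obstructions -/

/-- Contraction of the edge `uv` of `G`: `v` is merged into `u` (and becomes isolated). -/
def contractEdge (G : SimpleGraph V) (u v : V) : SimpleGraph V :=
  SimpleGraph.fromRel (fun a b => a ≠ v ∧ b ≠ v ∧
    (G.Adj a b ∨ (a = u ∧ G.Adj v b) ∨ (b = u ∧ G.Adj a v)))

/-- The class `A^k_{xy}`: `G` embeds in the orientable surface of genus `k-1`, or `G` is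
`xy`-alternating on the orientable surface of genus `k`. -/
def Akxy (G : SimpleGraph V) (x y : V) (k : ℕ) : Prop :=
  GenusLE G (k - 1) ∨ AltEmb G x y k

/-- `G` (with terminals `x, y`) is an obstruction for the class `A^k_{xy}`: it is not in the
class, but every deletion and every allowed contraction (one which does not identify the two
terminals) is. -/
def MinimalNotAk (G : SimpleGraph V) (x y : V) (k : ℕ) : Prop :=
  ¬ Akxy G x y k ∧
  (∀ e ∈ G.edgeSet, Akxy (G.deleteEdges {e}) x y k) ∧
  (∀ u v, G.Adj u v → v ≠ x → v ≠ y → Akxy (contractEdge G u v) x y k)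

/-! ### Cyclic label sequences -/

/-- The number of transitions between consecutive entries of a list. -/
def listTrans (w : List Bool) : ℕ := ((w.zip w.tail).filter (fun p => p.1 ≠ p.2)).length

/-- The number of transitions of a list, viewed as a cyclic sequence. -/
def cycTrans : List Bool → ℕ
  | [] => 0
  | a :: t => listTrans ((a :: t) ++ [a])

/-- The cyclic sequence of labelled vertices (labels are subsets of `{X, Y}`, with
`true = X`, `false = Y`) contains six distinct vertices, in this cyclic order or its
reverse, whose labels contain `X, Y, X, Y, X, Y` respectively. -/
def HasXYXYXY (n : ℕ) (lab : ZMod (n + 1) → Finset Bool) : Prop :=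
  ∃ (s : ZMod (n + 1)) (a : Fin 6 → ℕ) (ε : Bool), StrictMono a ∧ a 5 ≤ n ∧
    ∀ k : Fin 6, (decide (k.val % 2 = 0)) ∈
      lab (s + (if ε then ((a k : ℕ) : ZMod (n + 1)) else -((a k : ℕ) : ZMod (n + 1))))

/-- `L` arranges the labels of each vertex of the cyclic sequence into a list (each label
used exactly once). -/
def IsArrangement (n : ℕ) (lab : ZMod (n + 1) → Finset Bool)
    (L : ZMod (n + 1) → List Bool) : Prop :=
  ∀ i, (L i).Nodup ∧ (L i).toFinset = lab i

/-- The cyclic label sequence obtained by concatenating the arranged labels in the cyclic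
order of the vertices. -/
def arranged (n : ℕ) (L : ZMod (n + 1) → List Bool) : List Bool :=
  (List.ofFn (fun j : Fin (n + 1) => L ((j : ℕ) : ZMod (n + 1)))).flatten

end AltPaper


section S10AuxSection

open Equiv Equiv.Perm

namespace S10Aux

variable {α : Type*}

/-! ### Counting toolkit for setoids -/

/-- Number of classes of a setoid. -/
noncomputable def ncs (s : Setoid α) : ℕ := Nat.card (Quotient s)

lemma ncs_le_of_imp [Finite α] {r s : Setoid α} (h : ∀ x y, r x y → s x y) :
    ncs s ≤ ncs r := by
  have hsur : Function.Surjective (fun q : Quotient r => Quotient.map' id h q) := by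
    intro q
    refine Quotient.inductionOn q ?_
    intro a
    exact ⟨Quotient.mk'' a, rfl⟩
  exact Nat.card_le_card_of_surjective _ hsur

lemma card_succ_le_of_surj {A B : Type*} [Finite A] {f : A → B} (hf : Function.Surjective f)
    {a b : A} (hab : a ≠ b) (hfab : f a = f b) : Nat.card B + 1 ≤ Nat.card A := by
  classical
  have h1 : Function.Surjective (fun x : {x : A // x ≠ a} => f x.1) := by
    intro z
    obtain ⟨w, rfl⟩ := hf z
    by_cases hw : w = a
    · exact ⟨⟨b, hab.symm⟩, by rw [hw, hfab]⟩
    · exact ⟨⟨w, hw⟩, rfl⟩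
  have h2 : Nat.card B ≤ Nat.card {x : A // x ≠ a} := Nat.card_le_card_of_surjective _ h1
  have h3 : Nat.card A = Nat.card {x : A // x = a} + Nat.card {x : A // x ≠ a} := by
    rw [← Nat.card_sum]
    exact (Nat.card_congr (Equiv.sumCompl (· = a))).symm
  have h4 : Nat.card {x : A // x = a} = 1 := by
    have : Unique {x : A // x = a} := ⟨⟨⟨a, rfl⟩⟩, by rintro ⟨x, rfl⟩; rfl⟩
    exact Nat.card_unique
  omega

lemma ncs_succ_le [Finite α] {r s : Setoid α} (h : ∀ x y, r x y → s x y)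
    {a b : α} (hs : s a b) (hr : ¬ r a b) :
    ncs s + 1 ≤ ncs r := by
  have hsur : Function.Surjective (fun q : Quotient r => Quotient.map' id h q) := by
    intro q
    refine Quotient.inductionOn q ?_
    intro a
    exact ⟨Quotient.mk'' a, rfl⟩
  refine card_succ_le_of_surj hsur (a := Quotient.mk'' a) (b := Quotient.mk'' b) ?_ ?_
  · intro hc
    exact hr (Quotient.eq''.mp hc)
  · exact Quotient.sound' (by exact hs)

/-- The setoid obtained from `s` by merging the classes of `a` and `b`. -/
def joinPair (s : Setoid α) (a b : α) : Setoid α where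
  r x y := s x y ∨ (s x a ∧ s b y) ∨ (s x b ∧ s a y)
  iseqv := by
    constructor
    · intro x; exact Or.inl (s.refl x)
    · intro x y h
      rcases h with h | ⟨h1, h2⟩ | ⟨h1, h2⟩
      · exact Or.inl (s.symm h)
      · exact Or.inr (Or.inr ⟨s.symm h2, s.symm h1⟩)
      · exact Or.inr (Or.inl ⟨s.symm h2, s.symm h1⟩)
    · intro x y z hxy hyz
      rcases hxy with h | ⟨h1, h2⟩ | ⟨h1, h2⟩ <;>
        rcases hyz with g | ⟨g1, g2⟩ | ⟨g1, g2⟩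
      · exact Or.inl (s.trans h g)
      · exact Or.inr (Or.inl ⟨s.trans h g1, g2⟩)
      · exact Or.inr (Or.inr ⟨s.trans h g1, g2⟩)
      · exact Or.inr (Or.inl ⟨h1, s.trans h2 g⟩)
      · exact Or.inr (Or.inl ⟨h1, g2⟩)
      · exact Or.inl (s.trans h1 g2)
      · exact Or.inr (Or.inr ⟨h1, s.trans h2 g⟩)
      · exact Or.inl (s.trans h1 g2)
      · exact Or.inr (Or.inr ⟨h1, g2⟩)

lemma joinPair_self (s : Setoid α) (a b : α) : joinPair s a b a b :=
  Or.inr (Or.inl ⟨s.refl a, s.refl b⟩)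

lemma le_joinPair (s : Setoid α) (a b : α) : ∀ x y, s x y → joinPair s a b x y :=
  fun _ _ h => Or.inl h

lemma joinPair_eq_of_rel {s : Setoid α} {a b : α} (hab : s a b) :
    ∀ x y, joinPair s a b x y → s x y := by
  rintro x y (h | ⟨h1, h2⟩ | ⟨h1, h2⟩)
  · exact h
  · exact s.trans h1 (s.trans hab h2)
  · exact s.trans h1 (s.trans (s.symm hab) h2)

lemma card_le_succ_of_almost_inj {A B : Type*} [Finite A] [Finite B] (f : A → B) (a₀ b₀ : A)
    (h : ∀ x y, f x = f y → x = y ∨ (x = a₀ ∧ y = b₀) ∨ (x = b₀ ∧ y = a₀)) :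
    Nat.card A ≤ Nat.card B + 1 := by
  classical
  have hinj : Function.Injective (fun x : {x : A // x ≠ a₀} => f x.1) := by
    rintro ⟨x, hx⟩ ⟨y, hy⟩ hxy
    rcases h x y hxy with rfl | ⟨rfl, rfl⟩ | ⟨rfl, rfl⟩
    · rfl
    · exact absurd rfl hx
    · exact absurd rfl hy
  have h2 : Nat.card {x : A // x ≠ a₀} ≤ Nat.card B := Nat.card_le_card_of_injective _ hinj
  have h3 : Nat.card A = Nat.card {x : A // x = a₀} + Nat.card {x : A // x ≠ a₀} := by
    rw [← Nat.card_sum]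
    exact (Nat.card_congr (Equiv.sumCompl (· = a₀))).symm
  have h4 : Nat.card {x : A // x = a₀} = 1 := by
    have : Unique {x : A // x = a₀} := ⟨⟨⟨a₀, rfl⟩⟩, by rintro ⟨x, rfl⟩; rfl⟩
    exact Nat.card_unique
  omega

lemma ncs_le_joinPair_succ [Finite α] (s : Setoid α) (a b : α) :
    ncs s ≤ ncs (joinPair s a b) + 1 := by
  refine card_le_succ_of_almost_inj
    (fun q : Quotient s => Quotient.map' id (le_joinPair s a b) q)
    (Quotient.mk'' a) (Quotient.mk'' b) ?_
  intro X Y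
  refine Quotient.inductionOn₂ X Y ?_
  intro x y hxy
  have hxy' : joinPair s a b x y := Quotient.eq''.mp hxy
  rcases hxy' with h | ⟨h1, h2⟩ | ⟨h1, h2⟩
  · exact Or.inl (Quotient.sound' h)
  · exact Or.inr (Or.inl ⟨Quotient.sound' h1, Quotient.sound' (s.symm h2)⟩)
  · exact Or.inr (Or.inr ⟨Quotient.sound' h1, Quotient.sound' (s.symm h2)⟩)

/-! ### Swap surgery on permutations -/

/-- The same-cycle setoid of a permutation. -/
def scs (σ : Perm α) : Setoid α := ⟨σ.SameCycle, SameCycle.equivalence σ⟩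

/-- Number of cycles (orbits) of a permutation. -/
noncomputable def ncc (σ : Perm α) : ℕ := ncs (scs σ)

lemma scs_apply (σ : Perm α) (x y : α) : scs σ x y ↔ σ.SameCycle x y := Iff.rfl

section walk

variable [Finite α] [DecidableEq α] {σ : Perm α} {a b : α}

lemma pow_mod_cycle {k : ℕ} {x : α} (hfix : (σ ^ k) x = x) (n : ℕ) :
    (σ ^ n) x = (σ ^ (n % k)) x := by
  conv_lhs => rw [← Nat.div_add_mod n k]
  rw [add_comm, pow_add]
  simp only [Equiv.Perm.mul_apply]
  congr 1
  induction n / k with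
  | zero => simp
  | succ q ih =>
    rw [Nat.mul_succ, pow_add, Equiv.Perm.mul_apply, hfix, ih]

private lemma exists_hit (σ : Perm α) (a b : α) :
    ∃ n, 0 < n ∧ (σ ^ n) a ∈ ({a, b} : Set α) := by
  refine ⟨orderOf σ, ?_, ?_⟩
  · exact orderOf_pos σ
  · rw [pow_orderOf_eq_one]; simp

open scoped Classical in
private noncomputable def khit (σ : Perm α) (a b : α) : ℕ := Nat.find (exists_hit σ a b)

open scoped Classical in
lemma khit_spec (σ : Perm α) (a b : α) :
    0 < khit σ a b ∧ (σ ^ khit σ a b) a ∈ ({a, b} : Set α) := Nat.find_spec (exists_hit σ a b)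

open scoped Classical in
lemma khit_min (σ : Perm α) (a b : α) {j : ℕ} (hj : j < khit σ a b) :
    ¬(0 < j ∧ (σ ^ j) a ∈ ({a, b} : Set α)) := Nat.find_min (exists_hit σ a b) hj

lemma walk_eq (hab : a ≠ b) : ∀ j < khit σ a b, ((Equiv.swap a b * σ) ^ j) a = (σ ^ j) a := by
  intro j hj
  induction j with
  | zero => simp
  | succ i ih =>
    have hi : i < khit σ a b := Nat.lt_of_succ_lt hj
    have hnot : (σ ^ (i + 1)) a ∉ ({a, b} : Set α) := by
      intro hmem
      exact khit_min σ a b hj ⟨Nat.succ_pos i, hmem⟩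
    rw [pow_succ', pow_succ', Equiv.Perm.mul_apply, Equiv.Perm.mul_apply, ih hi]
    rw [pow_succ', Equiv.Perm.mul_apply] at hnot
    exact Equiv.swap_apply_of_ne_of_ne (fun h => hnot (by simp [h])) (fun h => hnot (by simp [h]))

lemma walk_last (hab : a ≠ b) :
    ((Equiv.swap a b * σ) ^ khit σ a b) a = Equiv.swap a b ((σ ^ khit σ a b) a) := by
  obtain ⟨hk, -⟩ := khit_spec σ a b
  obtain ⟨k, hke⟩ : ∃ k, khit σ a b = k + 1 := ⟨khit σ a b - 1, by omega⟩
  have hw := walk_eq (σ := σ) hab k (by omega)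
  rw [hke, pow_succ', pow_succ', Equiv.Perm.mul_apply, Equiv.Perm.mul_apply, hw,
    Equiv.Perm.mul_apply]

/-- Merging: if `a` and `b` are in different cycles, they are in the same cycle after the swap. -/
lemma sameCycle_swap_mul (hab : a ≠ b) (h : ¬σ.SameCycle a b) :
    (Equiv.swap a b * σ).SameCycle a b := by
  have hk := khit_spec σ a b
  have hka : (σ ^ khit σ a b) a = a := by
    rcases hk.2 with h1 | h1
    · exact h1
    · exact absurd ⟨(khit σ a b : ℤ), by simpa using h1⟩ h
  refine ⟨(khit σ a b : ℤ), ?_⟩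
  rw [zpow_natCast, walk_last hab, hka, Equiv.swap_apply_left]

/-- Splitting: if `a` and `b` are in the same cycle, they are in different cycles after swap. -/
lemma not_sameCycle_swap_mul (hab : a ≠ b) (h : σ.SameCycle a b) :
    ¬(Equiv.swap a b * σ).SameCycle a b := by
  have hex : ∃ n, 0 < n ∧ (σ ^ n) a = b := by
    obtain ⟨i, _, hi⟩ := h.exists_pow_eq'
    rcases Nat.eq_zero_or_pos i with rfl | hpos
    · simp at hi; exact absurd hi hab
    · exact ⟨i, hpos, hi⟩
  classical
  have hm0 : 0 < Nat.find hex := (Nat.find_spec hex).1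
  have hmb : (σ ^ Nat.find hex) a = b := (Nat.find_spec hex).2
  have hk0 : 0 < khit σ a b := (khit_spec σ a b).1
  have hkm : khit σ a b ≤ Nat.find hex := by
    by_contra hlt
    exact khit_min σ a b (by omega) ⟨hm0, by rw [hmb]; simp⟩
  have hkb : (σ ^ khit σ a b) a = b := by
    rcases (khit_spec σ a b).2 with h1 | h1
    · exfalso
      have hmk : khit σ a b < Nat.find hex := by
        rcases eq_or_lt_of_le hkm with heq | h2
        · exfalso; rw [heq] at h1; rw [h1] at hmb; exact hab hmb
        · exact h2
      have hco : (σ ^ (Nat.find hex - khit σ a b)) a = b := by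
        have h2 : (σ ^ (Nat.find hex - khit σ a b)) ((σ ^ khit σ a b) a)
            = (σ ^ Nat.find hex) a := by
          rw [← Equiv.Perm.mul_apply, ← pow_add, Nat.sub_add_cancel hkm]
        rw [h1] at h2
        rw [h2]; exact hmb
      exact Nat.find_min hex (by omega) ⟨by omega, hco⟩
    · exact h1
  have hret : ((Equiv.swap a b * σ) ^ khit σ a b) a = a := by
    rw [walk_last hab, hkb, Equiv.swap_apply_right]
  intro hsc
  obtain ⟨i, _, hi⟩ := hsc.exists_pow_eq'
  rw [pow_mod_cycle hret i] at hi
  have hik : i % khit σ a b < khit σ a b := Nat.mod_lt i hk0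
  rcases Nat.eq_zero_or_pos (i % khit σ a b) with hz | hpos
  · rw [hz] at hi; simp at hi; exact hab hi
  · rw [walk_eq hab _ hik] at hi
    exact Nat.find_min hex (by omega) ⟨hpos, hi⟩

/-- The universal simulation lemma: every cycle relation of `σ` holds in the join of the
cycle relation of `swap a b * σ` with the pair `(a, b)`. -/
lemma sameCycle_joinPair (σ : Perm α) (a b : α) {x y : α} (h : σ.SameCycle x y) :
    joinPair (scs (Equiv.swap a b * σ)) a b x y := by
  set σ' := Equiv.swap a b * σ with hσ'
  set J := joinPair (scs σ') a b with hJ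
  have key : ∀ z : α, J z (σ z) := by
    intro z
    have hz : σ z = Equiv.swap a b (σ' z) := by
      rw [hσ', Equiv.Perm.mul_apply, Equiv.swap_apply_self]
    by_cases h1 : σ' z = a
    · rw [hz, h1, Equiv.swap_apply_left]
      exact Or.inr (Or.inl ⟨⟨1, by simpa using h1⟩, (scs σ').refl _⟩)
    · by_cases h2 : σ' z = b
      · rw [hz, h2, Equiv.swap_apply_right]
        exact Or.inr (Or.inr ⟨⟨1, by simpa using h2⟩, (scs σ').refl _⟩)
      · rw [hz, Equiv.swap_apply_of_ne_of_ne h1 h2]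
        exact Or.inl ⟨1, by simp⟩
  have main : ∀ n : ℕ, J x ((σ ^ n) x) := by
    intro n
    induction n with
    | zero => exact J.refl x
    | succ i ih =>
      refine J.trans ih ?_
      rw [pow_succ', Equiv.Perm.mul_apply]
      exact key _
  obtain ⟨n, _, hn⟩ := h.exists_pow_eq'
  rw [← hn]
  exact main n

/-- Merging preserves cycle relations. -/
lemma sameCycle_of_swap_merge (hab : a ≠ b) (hnsc : ¬σ.SameCycle a b) {x y : α}
    (h : σ.SameCycle x y) : (Equiv.swap a b * σ).SameCycle x y :=
  joinPair_eq_of_rel (s := scs (Equiv.swap a b * σ))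
    (sameCycle_swap_mul hab hnsc) x y (sameCycle_joinPair σ a b h)

/-- Splitting increases the number of cycles. -/
lemma ncc_succ_le_swap (hab : a ≠ b) (h : σ.SameCycle a b) :
    ncc σ + 1 ≤ ncc (Equiv.swap a b * σ) := by
  have hns : ¬(Equiv.swap a b * σ).SameCycle a b := not_sameCycle_swap_mul hab h
  refine ncs_succ_le (r := scs (Equiv.swap a b * σ)) (s := scs σ) ?_ h hns
  intro x y hxy
  have := sameCycle_of_swap_merge (σ := Equiv.swap a b * σ) hab hns hxy
  rwa [← mul_assoc, Equiv.swap_mul_self, one_mul] at this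

/-- The two joins agree. -/
lemma joinPair_scs_eq (σ : Perm α) (a b : α) :
    ∀ x y, joinPair (scs σ) a b x y ↔ joinPair (scs (Equiv.swap a b * σ)) a b x y := by
  have key : ∀ τ υ : Perm α, υ = Equiv.swap a b * τ →
      ∀ x y, joinPair (scs τ) a b x y → joinPair (scs υ) a b x y := by
    rintro τ υ rfl x y h
    set J := joinPair (scs (Equiv.swap a b * τ)) a b with hJ
    rcases h with h | ⟨h1, h2⟩ | ⟨h1, h2⟩
    · exact sameCycle_joinPair τ a b h
    · exact J.trans (J.trans (sameCycle_joinPair τ a b h1)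
        (joinPair_self _ a b)) (sameCycle_joinPair τ a b h2)
    · exact J.trans (J.trans (sameCycle_joinPair τ a b h1)
        (J.symm (joinPair_self _ a b))) (sameCycle_joinPair τ a b h2)
  refine fun x y => ⟨key σ _ rfl x y, ?_⟩
  intro h
  have := key (Equiv.swap a b * σ) (Equiv.swap a b * (Equiv.swap a b * σ)) rfl x y h
  rwa [← mul_assoc, Equiv.swap_mul_self, one_mul] at this

/-- Any swap changes the number of cycles by at most one (downward direction). -/
lemma ncc_le_swap_succ (σ : Perm α) (a b : α) :
    ncc σ ≤ ncc (Equiv.swap a b * σ) + 1 := by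
  calc ncc σ ≤ ncs (joinPair (scs σ) a b) + 1 := ncs_le_joinPair_succ _ a b
  _ = ncs (joinPair (scs (Equiv.swap a b * σ)) a b) + 1 := by
      have := Quotient.congr (Equiv.refl α) (fun x y => by
        simpa using joinPair_scs_eq σ a b x y)
      rw [ncs, ncs, Nat.card_congr this]
  _ ≤ ncc (Equiv.swap a b * σ) + 1 := by
      have h5 : ncs (joinPair (scs (Equiv.swap a b * σ)) a b) ≤ ncc (Equiv.swap a b * σ) :=
        ncs_le_of_imp (le_joinPair _ a b)
      omega

end walk

/-! ### Components -/

/-- One-step relation generating connected components of the dart graph. -/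
def crel (ρ ι : Perm α) : α → α → Prop := fun u v => ρ u = v ∨ ι u = v

/-- The component setoid. -/
def compSetoid (ρ ι : Perm α) : Setoid α :=
  ⟨Relation.EqvGen (crel ρ ι), Relation.EqvGen.is_equivalence _⟩

/-- Number of components. -/
noncomputable def ncomp (ρ ι : Perm α) : ℕ := ncs (compSetoid ρ ι)

lemma compSetoid_step (ρ ι : Perm α) (u : α) : compSetoid ρ ι u (ρ u) :=
  Relation.EqvGen.rel _ _ (Or.inl rfl)

lemma compSetoid_step' (ρ ι : Perm α) (u : α) : compSetoid ρ ι u (ι u) :=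
  Relation.EqvGen.rel _ _ (Or.inr rfl)

lemma compSetoid_of_sameCycle_rot [Finite α] {ρ : Perm α} (ι : Perm α) {x y : α}
    (h : ρ.SameCycle x y) : compSetoid ρ ι x y := by
  have main : ∀ n : ℕ, compSetoid ρ ι x ((ρ ^ n) x) := by
    intro n
    induction n with
    | zero => exact (compSetoid ρ ι).refl x
    | succ i ih =>
      refine (compSetoid ρ ι).trans ih ?_
      rw [pow_succ', Equiv.Perm.mul_apply]
      exact compSetoid_step ρ ι _
  obtain ⟨n, _, hn⟩ := h.exists_pow_eq'
  rw [← hn]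
  exact main n

lemma compSetoid_of_sameCycle_face [Finite α] {ρ : Perm α} (ι : Perm α) {x y : α}
    (h : (ρ * ι).SameCycle x y) : compSetoid ρ ι x y := by
  have main : ∀ n : ℕ, compSetoid ρ ι x (((ρ * ι) ^ n) x) := by
    intro n
    induction n with
    | zero => exact (compSetoid ρ ι).refl x
    | succ i ih =>
      refine (compSetoid ρ ι).trans ih ?_
      rw [pow_succ', Equiv.Perm.mul_apply, Equiv.Perm.mul_apply]
      exact (compSetoid ρ ι).trans (compSetoid_step' ρ ι _) (compSetoid_step ρ ι _)
  obtain ⟨n, _, hn⟩ := h.exists_pow_eq'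
  rw [← hn]
  exact main n

section comps

variable [Finite α] [DecidableEq α]

/-- Simulation: component steps of `ρ` map into the join of the components of `swap a b * ρ`. -/
lemma compSetoid_joinPair (ρ ι : Perm α) (a b : α) {x y : α} (h : compSetoid ρ ι x y) :
    joinPair (compSetoid (Equiv.swap a b * ρ) ι) a b x y := by
  set ρ' := Equiv.swap a b * ρ with hρ'
  set J := joinPair (compSetoid ρ' ι) a b with hJ
  induction h with
  | rel u v huv =>
    rcases huv with hu | hu
    · have hz : ρ u = Equiv.swap a b (ρ' u) := by
        rw [hρ', Equiv.Perm.mul_apply, Equiv.swap_apply_self]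
      by_cases h1 : ρ' u = a
      · rw [← hu, hz, h1, Equiv.swap_apply_left]
        exact Or.inr (Or.inl ⟨by rw [← h1]; exact compSetoid_step ρ' ι u,
          (compSetoid ρ' ι).refl _⟩)
      · by_cases h2 : ρ' u = b
        · rw [← hu, hz, h2, Equiv.swap_apply_right]
          exact Or.inr (Or.inr ⟨by rw [← h2]; exact compSetoid_step ρ' ι u,
            (compSetoid ρ' ι).refl _⟩)
        · rw [← hu, hz, Equiv.swap_apply_of_ne_of_ne h1 h2]
          exact Or.inl (compSetoid_step ρ' ι u)
    · rw [← hu]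
      exact Or.inl (compSetoid_step' ρ' ι u)
  | refl u => exact J.refl u
  | symm u v _ ih => exact J.symm ih
  | trans u v w _ _ ih1 ih2 => exact J.trans ih1 ih2

lemma ncomp_swap_le_succ (ρ ι : Perm α) (a b : α) :
    ncomp (Equiv.swap a b * ρ) ι ≤ ncomp ρ ι + 1 := by
  calc ncomp (Equiv.swap a b * ρ) ι
      ≤ ncs (joinPair (compSetoid (Equiv.swap a b * ρ) ι) a b) + 1 :=
        ncs_le_joinPair_succ _ a b
  _ ≤ ncomp ρ ι + 1 := by
      have h5 : ncs (joinPair (compSetoid (Equiv.swap a b * ρ) ι) a b) ≤ ncomp ρ ι :=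
        ncs_le_of_imp (fun x y h => compSetoid_joinPair ρ ι a b h)
      omega

lemma ncomp_swap_le (ρ ι : Perm α) (a b : α)
    (hab : compSetoid (Equiv.swap a b * ρ) ι a b) :
    ncomp (Equiv.swap a b * ρ) ι ≤ ncomp ρ ι := by
  refine ncs_le_of_imp (fun x y h => ?_)
  exact joinPair_eq_of_rel (s := compSetoid (Equiv.swap a b * ρ) ι) hab x y
    (compSetoid_joinPair ρ ι a b h)

/-! ### The combined Euler step -/

lemma swapStep (σ ι : Perm α) {a b : α} (hab : a ≠ b)
    (hsc : σ.SameCycle a b ∨ (σ * ι).SameCycle a b) (E : ℕ)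
    (h : 2 * ncomp σ ι + E ≤ ncc (σ * ι) + ncc σ) :
    2 * ncomp (Equiv.swap a b * σ) ι + E
      ≤ ncc (Equiv.swap a b * σ * ι) + ncc (Equiv.swap a b * σ) := by
  have hassoc : Equiv.swap a b * σ * ι = Equiv.swap a b * (σ * ι) := mul_assoc _ _ _
  rw [hassoc]
  by_cases hr : σ.SameCycle a b
  · have hv : ncc σ + 1 ≤ ncc (Equiv.swap a b * σ) := ncc_succ_le_swap hab hr
    by_cases hf : (σ * ι).SameCycle a b
    · have hF : ncc (σ * ι) + 1 ≤ ncc (Equiv.swap a b * (σ * ι)) := ncc_succ_le_swap hab hf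
      have hc : ncomp (Equiv.swap a b * σ) ι ≤ ncomp σ ι + 1 := ncomp_swap_le_succ σ ι a b
      omega
    · have hF : ncc (σ * ι) ≤ ncc (Equiv.swap a b * (σ * ι)) + 1 := ncc_le_swap_succ (σ * ι) a b
      have hab' : compSetoid (Equiv.swap a b * σ) ι a b := by
        refine compSetoid_of_sameCycle_face ι ?_
        rw [mul_assoc]
        exact sameCycle_swap_mul hab hf
      have hc : ncomp (Equiv.swap a b * σ) ι ≤ ncomp σ ι := ncomp_swap_le σ ι a b hab'
      omega
  · have hf : (σ * ι).SameCycle a b := hsc.resolve_left hr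
    have hF : ncc (σ * ι) + 1 ≤ ncc (Equiv.swap a b * (σ * ι)) := ncc_succ_le_swap hab hf
    have hv : ncc σ ≤ ncc (Equiv.swap a b * σ) + 1 := ncc_le_swap_succ σ a b
    have hab' : compSetoid (Equiv.swap a b * σ) ι a b :=
      compSetoid_of_sameCycle_rot ι (sameCycle_swap_mul hab hr)
    have hc : ncomp (Equiv.swap a b * σ) ι ≤ ncomp σ ι := ncomp_swap_le σ ι a b hab'
    omega

end comps

/-! ### Exact orbit decomposition -/

section phases

variable {β : Type*} [Finite β] [DecidableEq β]

lemma sameCycle_swap_decomp {σ : Perm β} {a b x y : β}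
    (h : (Equiv.swap a b * σ).SameCycle x y) :
    σ.SameCycle x y ∨ (σ.SameCycle x a ∧ σ.SameCycle b y) ∨
      (σ.SameCycle x b ∧ σ.SameCycle a y) := by
  have h2 := sameCycle_joinPair (Equiv.swap a b * σ) a b h
  rw [← mul_assoc, Equiv.swap_mul_self, one_mul] at h2
  exact h2

/-- One vertex-merge step. -/
lemma mergeOne {M : Type*} {ι σ : Perm β} {μ μ' : β → M} {E : ℕ} {b t : β}
    (inv1 : ∀ d, μ (σ d) = μ d)
    (inv2 : ∀ d d', σ.SameCycle d d' ↔ μ d = μ d')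
    (euler : 2 * ncomp σ ι + E ≤ ncc (σ * ι) + ncc σ)
    (hface : (σ * ι).SameCycle b t)
    (hbt : μ b ≠ μ t)
    (hμ' : ∀ p r, μ' p = μ' r ↔
      (μ p = μ r ∨ ((μ p = μ b ∨ μ p = μ t) ∧ (μ r = μ b ∨ μ r = μ t)))) :
    (∀ d, μ' ((Equiv.swap b t * σ) d) = μ' d) ∧
    (∀ d d', (Equiv.swap b t * σ).SameCycle d d' ↔ μ' d = μ' d') ∧
    (2 * ncomp (Equiv.swap b t * σ) ι + E
      ≤ ncc (Equiv.swap b t * σ * ι) + ncc (Equiv.swap b t * σ)) := by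
  have hne : b ≠ t := fun h => hbt (by rw [h])
  have hnsc : ¬σ.SameCycle b t := fun h => hbt ((inv2 _ _).mp h)
  have hscbt' : (Equiv.swap b t * σ).SameCycle b t := sameCycle_swap_mul hne hnsc
  have hswapμ' : ∀ z, μ' (Equiv.swap b t z) = μ' z := by
    intro z
    by_cases h1 : z = b
    · rw [h1, Equiv.swap_apply_left]
      exact (hμ' t b).mpr (Or.inr ⟨Or.inr rfl, Or.inl rfl⟩)
    · by_cases h2 : z = t
      · rw [h2, Equiv.swap_apply_right]
        exact (hμ' b t).mpr (Or.inr ⟨Or.inl rfl, Or.inr rfl⟩)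
      · rw [Equiv.swap_apply_of_ne_of_ne h1 h2]
  refine ⟨?_, ?_, ?_⟩
  · intro d
    rw [Equiv.Perm.mul_apply, hswapμ']
    exact (hμ' _ _).mpr (Or.inl (inv1 d))
  · intro d d'
    constructor
    · intro h
      rcases sameCycle_swap_decomp h with h | ⟨h1, h2⟩ | ⟨h1, h2⟩
      · exact (hμ' _ _).mpr (Or.inl ((inv2 _ _).mp h))
      · exact (hμ' _ _).mpr (Or.inr ⟨Or.inl ((inv2 _ _).mp h1),
          Or.inr ((inv2 _ _).mp h2.symm)⟩)
      · exact (hμ' _ _).mpr (Or.inr ⟨Or.inr ((inv2 _ _).mp h1),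
          Or.inl ((inv2 _ _).mp h2.symm)⟩)
    · intro h
      rcases (hμ' d d').mp h with h | ⟨h1, h2⟩
      · exact sameCycle_of_swap_merge hne hnsc ((inv2 _ _).mpr h)
      · have g1 : (Equiv.swap b t * σ).SameCycle d b := by
          rcases h1 with h1 | h1
          · exact sameCycle_of_swap_merge hne hnsc ((inv2 _ _).mpr h1)
          · exact ((sameCycle_of_swap_merge hne hnsc ((inv2 _ _).mpr h1)).trans
              hscbt'.symm)
        have g2 : (Equiv.swap b t * σ).SameCycle b d' := by
          rcases h2 with h2 | h2
          · exact (sameCycle_of_swap_merge hne hnsc ((inv2 _ _).mpr h2)).symm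
          · exact hscbt'.trans
              (sameCycle_of_swap_merge hne hnsc ((inv2 _ _).mpr h2)).symm
        exact g1.trans g2
  · exact swapStep σ ι hne (Or.inr hface) E euler

/-- The deletion phase: make everything outside `K` a fixed point. -/
lemma deletePhase (ι : Perm β) (K : Set β) {M : Type*} (μ : β → M) (E : ℕ) :
    ∀ (N : ℕ) (σ : Perm β), ({d : β | d ∉ K ∧ σ d ≠ d}.ncard ≤ N) →
    (∀ d, μ (σ d) = μ d) →
    (∀ d d', d ∈ K → d' ∈ K → μ d = μ d' → σ.SameCycle d d') →
    (2 * ncomp σ ι + E ≤ ncc (σ * ι) + ncc σ) →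
    ∃ σ' : Perm β, (∀ d, μ (σ' d) = μ d) ∧
      (∀ d d', d ∈ K → d' ∈ K → μ d = μ d' → σ'.SameCycle d d') ∧
      (2 * ncomp σ' ι + E ≤ ncc (σ' * ι) + ncc σ') ∧
      (∀ d, d ∉ K → σ' d = d) := by
  intro N
  induction N with
  | zero =>
    intro σ hcard h1 h2 h3
    refine ⟨σ, h1, h2, h3, ?_⟩
    have hempty : {d : β | d ∉ K ∧ σ d ≠ d} = ∅ := by
      rw [← Set.ncard_eq_zero (Set.toFinite _)]
      omega
    intro d hd
    by_contra hfix
    have : d ∈ {d : β | d ∉ K ∧ σ d ≠ d} := ⟨hd, hfix⟩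
    rw [hempty] at this
    exact this
  | succ N ih =>
    intro σ hcard h1 h2 h3
    by_cases hem : {d : β | d ∉ K ∧ σ d ≠ d} = ∅
    · refine ⟨σ, h1, h2, h3, ?_⟩
      intro d hd
      by_contra hfix
      have : d ∈ {d : β | d ∉ K ∧ σ d ≠ d} := ⟨hd, hfix⟩
      rw [hem] at this
      exact this
    · obtain ⟨d0, hd0K, hd0f⟩ := Set.nonempty_iff_ne_empty.mpr hem
      set σ' := Equiv.swap d0 (σ d0) * σ with hσ'
      have hne : d0 ≠ σ d0 := fun h => hd0f h.symm
      have hfixd0 : σ' d0 = d0 := by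
        rw [hσ', Equiv.Perm.mul_apply, Equiv.swap_apply_right]
      have hkeepfix : ∀ d, σ d = d → σ' d = d := by
        intro d hd
        rw [hσ', Equiv.Perm.mul_apply, hd]
        have hd1 : d ≠ d0 := fun h => hd0f (by rw [← h, hd])
        have hd2 : d ≠ σ d0 := by
          intro h
          apply hd0f
          have := σ.injective (a₁ := σ d0) (a₂ := d0)
          apply this
          rw [← h, hd, h]
        exact Equiv.swap_apply_of_ne_of_ne hd1 hd2
      -- measure decreases
      have hsub : {d : β | d ∉ K ∧ σ' d ≠ d} ⊂ {d : β | d ∉ K ∧ σ d ≠ d} := by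
        constructor
        · rintro d ⟨hdK, hdf⟩
          refine ⟨hdK, fun h => hdf (hkeepfix d h)⟩
        · intro hsup
          have := hsup ⟨hd0K, hd0f⟩
          exact this.2 hfixd0
      have hcard' : {d : β | d ∉ K ∧ σ' d ≠ d}.ncard ≤ N := by
        have := Set.ncard_lt_ncard hsub (Set.toFinite _)
        omega
      -- invariants
      have hμd0 : μ (σ d0) = μ d0 := h1 d0
      have hswapμ : ∀ z, μ (Equiv.swap d0 (σ d0) z) = μ z := by
        intro z
        by_cases hz1 : z = d0
        · rw [hz1, Equiv.swap_apply_left, hμd0]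
        · by_cases hz2 : z = σ d0
          · rw [hz2, Equiv.swap_apply_right, hμd0]
          · rw [Equiv.swap_apply_of_ne_of_ne hz1 hz2]
      have h1' : ∀ d, μ (σ' d) = μ d := by
        intro d
        rw [hσ', Equiv.Perm.mul_apply, hswapμ]
        exact h1 d
      have h2' : ∀ d d', d ∈ K → d' ∈ K → μ d = μ d' → σ'.SameCycle d d' := by
        intro d d' hdK hd'K hμeq
        have hold := h2 d d' hdK hd'K hμeq
        have hJ := sameCycle_joinPair σ d0 (σ d0) hold
        rw [← hσ'] at hJ
        rcases hJ with h | ⟨ha, _⟩ | ⟨_, hb⟩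
        · exact h
        · exfalso
          have : d = d0 := ha.eq_of_right hfixd0
          rw [this] at hdK
          exact hd0K hdK
        · exfalso
          have : d' = d0 := (hb.symm).eq_of_right hfixd0
          rw [this] at hd'K
          exact hd0K hd'K
      have h3' : 2 * ncomp σ' ι + E ≤ ncc (σ' * ι) + ncc σ' := by
        rw [hσ']
        exact swapStep σ ι hne (Or.inl ⟨1, by simp⟩) E h3
      exact ih σ' hcard' h1' h2' h3'

end phases

/-! ### Quotient splitting along an invariant set, and other counting utilities -/

section split

variable {γ δ : Type*}

lemma ncs_congr_rel {r s : Setoid γ} (h : ∀ x y, r x y ↔ s x y) : ncs r = ncs s :=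
  Nat.card_congr (Quotient.congr (Equiv.refl γ) (by simpa using h))

lemma ncs_congr_equiv {r : Setoid γ} {s : Setoid δ} (e : γ ≃ δ)
    (h : ∀ x y, r x y ↔ s (e x) (e y)) : ncs r = ncs s :=
  Nat.card_congr (Quotient.congr e h)

/-- Splitting the class count along an invariant set. -/
lemma ncs_split [Finite γ] (s : Setoid γ) (K : Set γ)
    (hK : ∀ x y, s x y → (x ∈ K ↔ y ∈ K)) :
    ncs s = ncs (s.comap (Subtype.val : K → γ)) + ncs (s.comap (Subtype.val : ↥(Kᶜ) → γ)) := by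
  classical
  rw [ncs, ncs, ncs, ← Nat.card_sum]
  refine Nat.card_congr ?_
  refine ⟨?_, ?_, ?_, ?_⟩
  · refine Quotient.lift (fun x => if h : x ∈ K then
      Sum.inl (Quotient.mk (s.comap (Subtype.val : K → γ)) ⟨x, h⟩)
      else Sum.inr (Quotient.mk (s.comap (Subtype.val : ↥(Kᶜ) → γ)) ⟨x, h⟩)) ?_
    intro x y hxy
    by_cases hx : x ∈ K
    · have hy : y ∈ K := (hK x y hxy).mp hx
      simp only [dif_pos hx, dif_pos hy]
      exact congrArg _ (Quotient.sound hxy)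
    · have hy : y ∉ K := fun h => hx ((hK x y hxy).mpr h)
      simp only [dif_neg hx, dif_neg hy]
      exact congrArg _ (Quotient.sound hxy)
  · refine Sum.elim (Quotient.lift (fun k : K => Quotient.mk s k.val) ?_)
      (Quotient.lift (fun k : ↥(Kᶜ) => Quotient.mk s k.val) ?_)
    · intro x y hxy; exact Quotient.sound hxy
    · intro x y hxy; exact Quotient.sound hxy
  · intro q
    refine Quotient.inductionOn q ?_
    intro x
    by_cases hx : x ∈ K
    · simp only [Quotient.lift_mk, dif_pos hx, Sum.elim_inl]
    · simp only [Quotient.lift_mk, dif_neg hx, Sum.elim_inr]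
  · rintro (q | q) <;> refine Quotient.inductionOn q ?_
    · rintro ⟨x, hx⟩
      simp only [Quotient.lift_mk, Sum.elim_inl, dif_pos hx]
    · rintro ⟨x, hx⟩
      have hx' : x ∉ K := hx
      simp only [Quotient.lift_mk, Sum.elim_inr, dif_neg hx']

/-- Counting classes of an identity-like setoid. -/
lemma ncs_of_eq {s : Setoid γ} (h : ∀ x y, s x y ↔ x = y) : ncs s = Nat.card γ := by
  refine Nat.card_congr ⟨Quotient.lift id (fun x y hxy => (h x y).mp hxy), (Quotient.mk s), ?_, ?_⟩
  · intro q; exact Quotient.inductionOn q (fun x => rfl)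
  · intro x; rfl

/-- Counting classes of an involution-pairing setoid. -/
lemma card_eq_two_mul_ncs_pair [Finite γ] (ι : γ → γ) (hinv : ∀ x, ι (ι x) = x)
    (hnf : ∀ x, ι x ≠ x) {s : Setoid γ} (hs : ∀ x y, s x y ↔ (y = x ∨ y = ι x)) :
    Nat.card γ = 2 * ncs s := by
  classical
  have hout : ∀ q : Quotient s, Quotient.mk s (Quotient.out q) = q := Quotient.out_eq
  have key : ∀ x : γ, (Quotient.mk s x).out = x ∨ (Quotient.mk s x).out = ι x := by
    intro x
    rcases (hs _ _).mp (Quotient.mk_out x) with h | h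
    · exact Or.inl h.symm
    · right
      have h2 := congrArg ι h
      rw [hinv] at h2
      exact h2.symm
  have e : γ ≃ Quotient s × Bool := by
    refine ⟨fun x => (Quotient.mk s x, if x = (Quotient.mk s x).out then true else false),
      fun p => if p.2 then p.1.out else ι p.1.out, ?_, ?_⟩
    · intro x
      by_cases hx : x = (Quotient.mk s x).out
      · simp [if_pos hx, hx.symm]
      · rcases key x with h | h
        · exact absurd h.symm hx
        · simp [if_neg hx, h, hinv]
          exact fun h2 => h2.symm
    · rintro ⟨q, b⟩
      have hmkι : Quotient.mk s (ι q.out) = q := by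
        calc Quotient.mk s (ι q.out) = Quotient.mk s q.out := by
              refine Quotient.sound ?_
              refine (hs (ι q.out) q.out).mpr (Or.inr ?_)
              rw [hinv]
        _ = q := hout q
      cases b
      · refine Prod.ext ?_ ?_
        · simpa using hmkι
        · have hne : ι q.out ≠ q.out := hnf q.out
          simp [hmkι, hne]
      · refine Prod.ext ?_ ?_
        · simpa using hout q
        · simp [hout q]
  rw [Nat.card_congr e, Nat.card_prod]
  have hb : Nat.card Bool = 2 := by simp [Nat.card_eq_fintype_card]
  rw [hb, mul_comm]
  rfl

end split

section bridges

variable {γ δ : Type*}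

lemma mem_iff_of_sameCycle [Finite γ] {τ : Perm γ} {K : Set γ} (hτ : ∀ x, x ∈ K ↔ τ x ∈ K)
    {x y : γ} (h : τ.SameCycle x y) : (x ∈ K ↔ y ∈ K) := by
  have main : ∀ n : ℕ, (x ∈ K ↔ (τ ^ n) x ∈ K) := by
    intro n
    induction n with
    | zero => simp
    | succ i ih =>
      rw [pow_succ', Equiv.Perm.mul_apply]
      exact ih.trans (hτ _)
  obtain ⟨n, -, hn⟩ := h.exists_pow_eq'
  rw [← hn]
  exact main n

lemma ncc_split [Finite γ] (τ : Perm γ) (K : Set γ) (hτ : ∀ x, x ∈ K ↔ τ x ∈ K) :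
    ncc τ = ncc (τ.subtypePerm (fun x => (hτ x).symm))
      + ncc (τ.subtypePerm (p := fun x => x ∈ Kᶜ) (fun x => (not_congr (hτ x)).symm : ∀ x, τ x ∈ Kᶜ ↔ x ∈ Kᶜ)) := by
  rw [ncc, ncs_split (scs τ) K (fun x y h => mem_iff_of_sameCycle hτ h)]
  congr 1
  · exact ncs_congr_rel (fun x y => (Equiv.Perm.sameCycle_subtypePerm).symm)
  · exact ncs_congr_rel (fun x y => (Equiv.Perm.sameCycle_subtypePerm).symm)

lemma comp_mem_iff {ρ ι : Perm γ} {K : Set γ} (hρ : ∀ x, x ∈ K ↔ ρ x ∈ K)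
    (hι : ∀ x, x ∈ K ↔ ι x ∈ K) {x y : γ} (h : compSetoid ρ ι x y) : (x ∈ K ↔ y ∈ K) := by
  induction h with
  | rel u v huv =>
    rcases huv with h2 | h2
    · rw [← h2]; exact hρ u
    · rw [← h2]; exact hι u
  | refl u => exact Iff.rfl
  | symm u v _ ih => exact ih.symm
  | trans u v w _ _ ih1 ih2 => exact ih1.trans ih2

lemma compSetoid_comap_iff {ρ ι : Perm γ} {K : Set γ} (hρ : ∀ x, x ∈ K ↔ ρ x ∈ K)
    (hι : ∀ x, x ∈ K ↔ ι x ∈ K) (x y : ↥K) :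
    compSetoid ρ ι x.val y.val ↔
      compSetoid (ρ.subtypePerm (fun x => (hρ x).symm)) (ι.subtypePerm (fun x => (hι x).symm)) x y := by
  constructor
  · suffices h : ∀ u v, Relation.EqvGen (crel ρ ι) u v → ∀ (hu : u ∈ K) (hv : v ∈ K),
        Relation.EqvGen (crel (ρ.subtypePerm (fun x => (hρ x).symm)) (ι.subtypePerm (fun x => (hι x).symm))) ⟨u, hu⟩ ⟨v, hv⟩ by
      intro hxy
      exact h _ _ hxy x.2 y.2
    intro u v huv
    induction huv with
    | rel u v h2 =>
      intro hu hv
      refine Relation.EqvGen.rel _ _ ?_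
      rcases h2 with h2 | h2
      · exact Or.inl (Subtype.ext h2)
      · exact Or.inr (Subtype.ext h2)
    | refl u => intro hu hv; exact Relation.EqvGen.refl _
    | symm u v h2 ih => intro hu hv; exact Relation.EqvGen.symm _ _ (ih hv hu)
    | trans u v w h1 h2 ih1 ih2 =>
      intro hu hw
      have hv : v ∈ K := (comp_mem_iff hρ hι h1).mp hu
      exact Relation.EqvGen.trans _ _ _ (ih1 hu hv) (ih2 hv hw)
  · intro h
    induction h with
    | rel a b hab =>
      refine Relation.EqvGen.rel _ _ ?_
      rcases hab with h2 | h2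
      · exact Or.inl (by rw [← h2]; rfl)
      · exact Or.inr (by rw [← h2]; rfl)
    | refl a => exact Relation.EqvGen.refl _
    | symm a b _ ih => exact Relation.EqvGen.symm _ _ ih
    | trans a b c _ _ ih1 ih2 => exact Relation.EqvGen.trans _ _ _ ih1 ih2

lemma ncomp_split [Finite γ] (ρ ι : Perm γ) (K : Set γ) (hρ : ∀ x, x ∈ K ↔ ρ x ∈ K)
    (hι : ∀ x, x ∈ K ↔ ι x ∈ K) :
    ncomp ρ ι = ncomp (ρ.subtypePerm (fun x => (hρ x).symm)) (ι.subtypePerm (fun x => (hι x).symm))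
      + ncomp (ρ.subtypePerm (p := fun x => x ∈ Kᶜ) (fun x => (not_congr (hρ x)).symm : ∀ x, ρ x ∈ Kᶜ ↔ x ∈ Kᶜ))
          (ι.subtypePerm (p := fun x => x ∈ Kᶜ) (fun x => (not_congr (hι x)).symm : ∀ x, ι x ∈ Kᶜ ↔ x ∈ Kᶜ)) := by
  rw [ncomp, ncs_split (compSetoid ρ ι) K (fun x y h => comp_mem_iff hρ hι h)]
  congr 1
  · exact ncs_congr_rel (fun x y => compSetoid_comap_iff hρ hι x y)
  · exact ncs_congr_rel (fun x y => compSetoid_comap_iff (fun x => not_congr (hρ x) : ∀ x, x ∈ Kᶜ ↔ ρ x ∈ Kᶜ)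
    (fun x => not_congr (hι x) : ∀ x, x ∈ Kᶜ ↔ ι x ∈ Kᶜ) x y)

/-! ### Translation from `orbitRel` quotients -/

lemma orbit_zpowers_eq_ncc (τ : Perm γ) :
    Nat.card (MulAction.orbitRel.Quotient (Subgroup.zpowers τ) γ) = ncc τ := by
  refine ncs_congr_rel ?_
  intro x y
  rw [MulAction.orbitRel_apply, MulAction.mem_orbit_iff]
  constructor
  · rintro ⟨⟨g, hg⟩, hact⟩
    obtain ⟨k, rfl⟩ := Subgroup.mem_zpowers_iff.mp hg
    have hact' : (τ ^ k) y = x := hact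
    exact Equiv.Perm.SameCycle.symm ⟨k, hact'⟩
  · rintro ⟨i, hi⟩
    refine ⟨⟨τ ^ (-i), Subgroup.zpow_mem _ (Subgroup.mem_zpowers τ) _⟩, ?_⟩
    show (τ ^ (-i)) y = x
    rw [← hi, zpow_neg, Equiv.Perm.inv_def, Equiv.symm_apply_apply]

lemma orbit_closure_eq_ncomp (ρ ι : Perm γ) :
    Nat.card (MulAction.orbitRel.Quotient (Subgroup.closure ({ρ, ι} : Set (Perm γ))) γ)
      = ncomp ρ ι := by
  refine ncs_congr_rel ?_
  intro x y
  rw [MulAction.orbitRel_apply, MulAction.mem_orbit_iff]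
  constructor
  · rintro ⟨⟨g, hg⟩, hact⟩
    have key : ∀ p : Perm γ, p ∈ Subgroup.closure ({ρ, ι} : Set (Perm γ)) →
        ∀ z, compSetoid ρ ι z (p z) := by
      intro p hp
      refine Subgroup.closure_induction ?_ ?_ ?_ ?_ hp
      · rintro p (rfl | rfl)
        · exact fun z => compSetoid_step _ _ z
        · exact fun z => compSetoid_step' _ _ z
      · exact fun z => (compSetoid ρ ι).refl z
      · rintro p q _ _ ihp ihq z
        exact (compSetoid ρ ι).trans (ihq z) (ihp (q z))
      · rintro p _ ihp z
        have h2 := ihp (p⁻¹ z)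
        rw [Equiv.Perm.inv_def, Equiv.apply_symm_apply] at h2
        exact (compSetoid ρ ι).symm h2
    have hact' : g y = x := hact
    rw [← hact']
    exact (compSetoid ρ ι).symm (key g hg y)
  · intro h
    induction h with
    | rel u v huv =>
      rcases huv with h2 | h2
      · refine ⟨⟨ρ⁻¹, Subgroup.inv_mem _ (Subgroup.subset_closure (Or.inl rfl))⟩, ?_⟩
        show ρ⁻¹ v = u
        rw [← h2, Equiv.Perm.inv_def, Equiv.symm_apply_apply]
      · refine ⟨⟨ι⁻¹, Subgroup.inv_mem _ (Subgroup.subset_closure (Or.inr rfl))⟩, ?_⟩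
        show ι⁻¹ v = u
        rw [← h2, Equiv.Perm.inv_def, Equiv.symm_apply_apply]
    | refl u => exact ⟨1, rfl⟩
    | symm u v _ ih =>
      obtain ⟨g, hg⟩ := ih
      refine ⟨g⁻¹, ?_⟩
      rw [← hg, inv_smul_smul]
    | trans u v w _ _ ih1 ih2 =>
      obtain ⟨g1, hg1⟩ := ih1
      obtain ⟨g2, hg2⟩ := ih2
      refine ⟨g1 * g2, ?_⟩
      rw [mul_smul, hg2, hg1]

/-! ### Equivariant transport -/

lemma sameCycle_congr [Finite γ] [Finite δ] (e : γ ≃ δ) (τ : Perm γ) (τ' : Perm δ)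
    (h : ∀ x, τ' (e x) = e (τ x)) (x y : γ) : τ.SameCycle x y ↔ τ'.SameCycle (e x) (e y) := by
  have hpow : ∀ (n : ℕ) (z : γ), (τ' ^ n) (e z) = e ((τ ^ n) z) := by
    intro n
    induction n with
    | zero => simp
    | succ i ih =>
      intro z
      rw [pow_succ', pow_succ', Equiv.Perm.mul_apply, Equiv.Perm.mul_apply, ih, h]
  constructor
  · intro hc
    obtain ⟨n, -, hn⟩ := hc.exists_pow_eq'
    exact ⟨n, by rw [zpow_natCast, hpow, hn]⟩
  · intro hc
    obtain ⟨n, -, hn⟩ := hc.exists_pow_eq'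
    refine ⟨n, ?_⟩
    rw [zpow_natCast]
    exact e.injective (by rw [← hpow]; exact hn)

lemma ncc_congr [Finite γ] [Finite δ] (e : γ ≃ δ) (τ : Perm γ) (τ' : Perm δ)
    (h : ∀ x, τ' (e x) = e (τ x)) : ncc τ = ncc τ' :=
  ncs_congr_equiv e (sameCycle_congr e τ τ' h)

lemma ncomp_congr (e : γ ≃ δ) (ρ ι : Perm γ) (ρ' ι' : Perm δ)
    (hρ : ∀ x, ρ' (e x) = e (ρ x)) (hι : ∀ x, ι' (e x) = e (ι x)) :
    ncomp ρ ι = ncomp ρ' ι' := by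
  refine ncs_congr_equiv e ?_
  intro x y
  constructor
  · intro h
    induction h with
    | rel u v huv =>
      refine Relation.EqvGen.rel _ _ ?_
      rcases huv with h2 | h2
      · exact Or.inl (by rw [hρ, h2])
      · exact Or.inr (by rw [hι, h2])
    | refl u => exact Relation.EqvGen.refl _
    | symm u v _ ih => exact Relation.EqvGen.symm _ _ ih
    | trans u v w _ _ ih1 ih2 => exact Relation.EqvGen.trans _ _ _ ih1 ih2
  · intro h
    suffices hgen : ∀ u v : δ, Relation.EqvGen (crel ρ' ι') u v →
        Relation.EqvGen (crel ρ ι) (e.symm u) (e.symm v) by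
      have h2 := hgen _ _ h
      exact (by simpa using h2 : Relation.EqvGen (crel ρ ι) x y)
    intro u v huv
    induction huv with
    | rel u v h2 =>
      refine Relation.EqvGen.rel _ _ ?_
      rcases h2 with h2 | h2
      · refine Or.inl ?_
        have h3 := hρ (e.symm u)
        rw [e.apply_symm_apply, h2] at h3
        rw [h3, e.symm_apply_apply]
      · refine Or.inr ?_
        have h3 := hι (e.symm u)
        rw [e.apply_symm_apply, h2] at h3
        rw [h3, e.symm_apply_apply]
    | refl u => exact Relation.EqvGen.refl _
    | symm u v _ ih => exact Relation.EqvGen.symm _ _ ih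
    | trans u v w _ _ ih1 ih2 => exact Relation.EqvGen.trans _ _ _ ih1 ih2

lemma mem_iff_of_fixed_compl {τ : Perm γ} {K : Set γ} (h : ∀ d, d ∉ K → τ d = d) :
    ∀ d, d ∈ K ↔ τ d ∈ K := by
  intro d
  constructor
  · intro hd
    by_contra hc
    have h2 : τ (τ d) = τ d := h _ hc
    have h3 : τ d = d := τ.injective h2
    rw [h3] at hc
    exact hc hd
  · intro hd
    by_contra hc
    rw [h d hc] at hd
    exact hc hd

lemma subtypePerm_pow_val {p : γ → Prop} (τ : Perm γ) (hτ : ∀ x, p x ↔ p (τ x))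
    (n : ℕ) (k : {x // p x}) : (((τ.subtypePerm (fun x => (hτ x).symm)) ^ n) k).val = (τ ^ n) k.val := by
  induction n with
  | zero => rfl
  | succ i ih =>
    rw [pow_succ', pow_succ', Equiv.Perm.mul_apply, Equiv.Perm.mul_apply, ← ih]
    rfl

lemma sameCycle_iff_pair [Finite γ] {τ : Perm γ} (hinv : ∀ x, τ (τ x) = x) (x y : γ) :
    τ.SameCycle x y ↔ (y = x ∨ y = τ x) := by
  constructor
  · intro h
    have main : ∀ n : ℕ, (τ ^ n) x = x ∨ (τ ^ n) x = τ x := by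
      intro n
      induction n with
      | zero => exact Or.inl rfl
      | succ i ih =>
        rw [pow_succ', Equiv.Perm.mul_apply]
        rcases ih with h2 | h2
        · rw [h2]; exact Or.inr rfl
        · rw [h2, hinv]; exact Or.inl rfl
    obtain ⟨n, -, hn⟩ := h.exists_pow_eq'
    rw [← hn]
    rcases main n with h2 | h2
    · exact Or.inl h2
    · exact Or.inr h2
  · rintro (rfl | rfl)
    · exact Equiv.Perm.SameCycle.refl _ _
    · exact ⟨1, by simp⟩

lemma ncc_of_id [Finite γ] {τ : Perm γ} (h : ∀ x, τ x = x) : ncc τ = Nat.card γ := by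
  refine ncs_of_eq (fun x y => ?_)
  constructor
  · intro h2
    exact (Equiv.Perm.SameCycle.eq_of_left h2 (h x)).symm ▸ rfl
  · rintro rfl
    exact Equiv.Perm.SameCycle.refl _ _

lemma comp_iff_pair {ρ ι : Perm γ} (hρ : ∀ x, ρ x = x) (hinv : ∀ x, ι (ι x) = x) (x y : γ) :
    compSetoid ρ ι x y ↔ (y = x ∨ y = ι x) := by
  constructor
  · intro h
    induction h with
    | rel u v huv =>
      rcases huv with h2 | h2
      · rw [hρ] at h2; exact Or.inl h2.symm
      · exact Or.inr h2.symm
    | refl u => exact Or.inl rfl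
    | symm u v _ ih =>
      rcases ih with rfl | rfl
      · exact Or.inl rfl
      · exact Or.inr (by rw [hinv])
    | trans u v w _ _ ih1 ih2 =>
      rcases ih1 with rfl | rfl <;> rcases ih2 with rfl | rfl
      · exact Or.inl rfl
      · exact Or.inr rfl
      · exact Or.inr rfl
      · exact Or.inl (by rw [hinv])
  · rintro (rfl | rfl)
    · exact (compSetoid ρ ι).refl _
    · exact compSetoid_step' ρ ι x

/-- The dart count of a simple graph is twice the edge count. -/
lemma dart_card_eq {V' : Type*} (H : SimpleGraph V') [Finite H.Dart] :
    Nat.card H.Dart = 2 * Nat.card H.edgeSet := by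
  classical
  have hs : ∀ x y : H.Dart, (⟨fun x y => y = x ∨ y = x.symm, ?_⟩ : Setoid H.Dart) x y ↔
      (y = x ∨ y = x.symm) := fun x y => Iff.rfl
  case refine_1 =>
    constructor
    · intro d; exact Or.inl rfl
    · rintro a b (rfl | rfl)
      · exact Or.inl rfl
      · exact Or.inr (SimpleGraph.Dart.symm_involutive _).symm
    · rintro a b c (rfl | rfl) (h | h)
      · exact Or.inl h
      · exact Or.inr h
      · rw [h]; exact Or.inr rfl
      · rw [h, SimpleGraph.Dart.symm_involutive]; exact Or.inl rfl
  rw [card_eq_two_mul_ncs_pair (fun d : H.Dart => d.symm)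
    (fun d => SimpleGraph.Dart.symm_involutive d) (fun d => SimpleGraph.Dart.symm_ne d) hs]
  congr 1
  rw [ncs]
  refine Nat.card_congr (Equiv.ofBijective
    (Quotient.lift (fun d : H.Dart => (⟨d.edge, d.edge_mem⟩ : H.edgeSet)) ?_) ⟨?_, ?_⟩)
  · rintro a b (rfl | rfl)
    · rfl
    · exact Subtype.ext (SimpleGraph.Dart.edge_symm _).symm
  · intro q1 q2
    refine Quotient.inductionOn₂ q1 q2 ?_
    intro d1 d2 h
    have he : d1.edge = d2.edge := congrArg Subtype.val h
    rcases (SimpleGraph.dart_edge_eq_iff d1 d2).mp he with rfl | h2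
    · rfl
    · exact Quotient.sound (Or.inr (by rw [h2, SimpleGraph.Dart.symm_involutive]))
  · rintro ⟨e, he⟩
    induction e with
    | _ a b =>
      rw [SimpleGraph.mem_edgeSet] at he
      exact ⟨Quotient.mk _ (⟨(a, b), he⟩ : H.Dart), rfl⟩

end bridges


end S10Aux

namespace S10Graph

open S10Aux AltPaper SimpleGraph

variable {V : Type*} [DecidableEq V]

/-- The quotient map identifying the four split vertices. -/
def qmap (x y : V) : V ⊕ Bool → V
  | Sum.inl v => if v = y then x else v
  | Sum.inr _ => x

/-- The partial merge maps. -/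
def nu1 (x y : V) : V ⊕ Bool → V ⊕ Bool := fun w =>
  if w = Sum.inr false then Sum.inl x else w
def nu2 (x y : V) : V ⊕ Bool → V ⊕ Bool := fun w =>
  if w = Sum.inl y ∨ w = Sum.inr false then Sum.inl x else w
def nu3 (x y : V) : V ⊕ Bool → V ⊕ Bool := fun w =>
  if w = Sum.inl y ∨ w = Sum.inr false ∨ w = Sum.inr true then Sum.inl x else w

variable {x y : V}

lemma qmap_proj (w : V ⊕ Bool) :
    qmap x y w = if splitProj x y w = y then x else splitProj x y w := by
  rcases w with v | (_ | _) <;> simp [qmap, splitProj] <;> split_ifs <;> simp_all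

lemma qmap_ne_y (hxy : x ≠ y) (w : V ⊕ Bool) : qmap x y w ≠ y := by
  rcases w with v | b
  · simp only [qmap]
    split_ifs with h
    · exact hxy
    · exact h
  · exact hxy

lemma nu1_iff (w w' : V ⊕ Bool) :
    nu1 x y w = nu1 x y w' ↔ (w = w' ∨
      ((w = Sum.inl x ∨ w = Sum.inr false) ∧ (w' = Sum.inl x ∨ w' = Sum.inr false))) := by
  unfold nu1
  split_ifs with h1 h2 h2 <;> subst_eqs <;> simp_all <;> tauto

lemma nu2_iff (hxy : x ≠ y) (w w' : V ⊕ Bool) :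
    nu2 x y w = nu2 x y w' ↔ (nu1 x y w = nu1 x y w' ∨
      ((nu1 x y w = Sum.inl x ∨ nu1 x y w = Sum.inl y) ∧
       (nu1 x y w' = Sum.inl x ∨ nu1 x y w' = Sum.inl y))) := by
  unfold nu1 nu2
  split_ifs <;> subst_eqs <;> simp_all <;> tauto

lemma nu3_iff (hxy : x ≠ y) (w w' : V ⊕ Bool) :
    nu3 x y w = nu3 x y w' ↔ (nu2 x y w = nu2 x y w' ∨
      ((nu2 x y w = Sum.inl x ∨ nu2 x y w = Sum.inr true) ∧
       (nu2 x y w' = Sum.inl x ∨ nu2 x y w' = Sum.inr true))) := by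
  unfold nu2 nu3
  split_ifs <;> subst_eqs <;> simp_all <;> tauto

lemma nu3_iff_qmap (hxy : x ≠ y) (w w' : V ⊕ Bool) :
    nu3 x y w = nu3 x y w' ↔ qmap x y w = qmap x y w' := by
  rcases w with v | (_ | _) <;> rcases w' with v' | (_ | _) <;>
    simp only [nu3, qmap] <;> split_ifs <;> subst_eqs <;> simp_all <;> tauto


section adj

variable {G : SimpleGraph V} {G' : SimpleGraph (V ⊕ Bool)}

lemma pinch_adj_of (hxy : x ≠ y) (hsplit : IsSplitAt G x y G') {u w : V ⊕ Bool}
    (hadj : G'.Adj u w) (hq : qmap x y u ≠ qmap x y w) :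
    (pinch G x y).Adj (qmap x y u) (qmap x y w) := by
  have hG : G.Adj (splitProj x y u) (splitProj x y w) := hsplit.1 u w hadj
  rw [pinch, SimpleGraph.fromRel_adj]
  refine ⟨hq, Or.inl ⟨qmap_ne_y hxy u, qmap_ne_y hxy w, splitProj x y u, splitProj x y w, hG,
    ?_, ?_⟩⟩
  · rw [qmap_proj]
    split_ifs with h
    · exact Or.inr ⟨h, rfl⟩
    · exact Or.inl rfl
  · rw [qmap_proj]
    split_ifs with h
    · exact Or.inr ⟨h, rfl⟩
    · exact Or.inl rfl

lemma pinch_adj_surj (hsplit : IsSplitAt G x y G') {a b : V}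
    (hadj : (pinch G x y).Adj a b) :
    ∃ d : G'.Dart, qmap x y d.fst = a ∧ qmap x y d.snd = b := by
  rw [pinch, SimpleGraph.fromRel_adj] at hadj
  obtain ⟨hne, hrel | hrel⟩ := hadj
  · obtain ⟨ha', hb', a', b', hGadj, ha, hb⟩ := hrel
    obtain ⟨u, w, huw, hu, hw⟩ := hsplit.2.1 a' b' hGadj
    refine ⟨⟨(u, w), huw⟩, ?_, ?_⟩
    · show qmap x y u = a
      rw [qmap_proj, hu]
      rcases ha with rfl | ⟨rfl, rfl⟩
      · exact if_neg ha'
      · exact if_pos rfl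
    · show qmap x y w = b
      rw [qmap_proj, hw]
      rcases hb with rfl | ⟨rfl, rfl⟩
      · exact if_neg hb'
      · exact if_pos rfl
  · obtain ⟨hb', ha', b', a', hGadj, hb, ha⟩ := hrel
    obtain ⟨u, w, huw, hu, hw⟩ := hsplit.2.1 b' a' hGadj
    refine ⟨⟨(w, u), huw.symm⟩, ?_, ?_⟩
    · show qmap x y w = a
      rw [qmap_proj, hw]
      rcases ha with rfl | ⟨rfl, rfl⟩
      · exact if_neg ha'
      · exact if_pos rfl
    · show qmap x y u = b
      rw [qmap_proj, hu]
      rcases hb with rfl | ⟨rfl, rfl⟩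
      · exact if_neg hb'
      · exact if_pos rfl

/-- The `q`-image edge of a dart. -/
def em (x y : V) (d : G'.Dart) : Sym2 V := s(qmap x y d.fst, qmap x y d.snd)

lemma exists_over (hsplit : IsSplitAt G x y G') {e : Sym2 V}
    (he : e ∈ (pinch G x y).edgeSet) : ∃ d : G'.Dart, em x y d = e := by
  induction e with
  | _ a b =>
    rw [SimpleGraph.mem_edgeSet] at he
    obtain ⟨d, h1, h2⟩ := pinch_adj_surj hsplit he
    exact ⟨d, by rw [em, h1, h2]⟩

/-- A chosen dart over a pinch edge. -/
noncomputable def chd (x y : V) (e : Sym2 V) (he : ∃ d : G'.Dart, em x y d = e) : G'.Dart :=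
  he.choose

lemma chd_spec (x y : V) (e : Sym2 V) (he : ∃ d : G'.Dart, em x y d = e) :
    em x y (chd x y e he) = e := he.choose_spec

lemma chd_congr {e e' : Sym2 V} (h : e = e') (he : ∃ d : G'.Dart, em x y d = e) :
    chd x y e he = chd x y e' (h ▸ he) := by cases h; rfl

variable (hxy : x ≠ y) (hsplit : IsSplitAt G x y G')

/-- The chosen dart over a pinch dart, correctly oriented. -/
noncomputable def kdart (pd : (pinch G x y).Dart) : G'.Dart :=
  if qmap x y (chd x y pd.edge (exists_over hsplit pd.edge_mem)).fst = pd.fst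
    then chd x y pd.edge (exists_over hsplit pd.edge_mem)
    else (chd x y pd.edge (exists_over hsplit pd.edge_mem)).symm

lemma chd_pair (pd : (pinch G x y).Dart) :
    (qmap x y (chd x y pd.edge (exists_over hsplit pd.edge_mem)).fst = pd.fst ∧
     qmap x y (chd x y pd.edge (exists_over hsplit pd.edge_mem)).snd = pd.snd) ∨
    (qmap x y (chd x y pd.edge (exists_over hsplit pd.edge_mem)).fst = pd.snd ∧
     qmap x y (chd x y pd.edge (exists_over hsplit pd.edge_mem)).snd = pd.fst) := by
  have hch := chd_spec x y pd.edge (exists_over hsplit pd.edge_mem)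
  rw [em] at hch
  have hch2 : s(qmap x y (chd x y pd.edge (exists_over hsplit pd.edge_mem)).fst,
      qmap x y (chd x y pd.edge (exists_over hsplit pd.edge_mem)).snd)
      = s(pd.fst, pd.snd) := hch
  rwa [Sym2.eq_iff] at hch2

lemma kdart_spec (pd : (pinch G x y).Dart) :
    qmap x y (kdart hsplit pd).fst = pd.fst ∧ qmap x y (kdart hsplit pd).snd = pd.snd := by
  have hne : pd.fst ≠ pd.snd := pd.adj.ne
  rw [kdart]
  split_ifs with hcond
  · rcases chd_pair hsplit pd with ⟨h1, h2⟩ | ⟨h1, h2⟩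
    · exact ⟨h1, h2⟩
    · exact absurd (hcond.symm.trans h1) hne
  · rcases chd_pair hsplit pd with ⟨h1, h2⟩ | ⟨h1, h2⟩
    · exact absurd h1 hcond
    · exact ⟨h2, h1⟩

lemma kdart_symm (pd : (pinch G x y).Dart) :
    kdart hsplit pd.symm = (kdart hsplit pd).symm := by
  have hne : pd.fst ≠ pd.snd := pd.adj.ne
  have hes : pd.symm.edge = pd.edge := SimpleGraph.Dart.edge_symm pd
  rw [kdart, kdart]
  rw [chd_congr hes (exists_over hsplit pd.symm.edge_mem)]
  have hchd : chd x y pd.edge (hes ▸ exists_over hsplit pd.symm.edge_mem)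
      = chd x y pd.edge (exists_over hsplit pd.edge_mem) := rfl
  rw [hchd]
  split_ifs with h1 h2 h2
  · exfalso
    have h1' : qmap x y (chd x y pd.edge (exists_over hsplit pd.edge_mem)).fst = pd.snd := h1
    exact hne (h2.symm.trans h1')
  · exact (SimpleGraph.Dart.symm_involutive _).symm
  · rfl
  · exfalso
    rcases chd_pair hsplit pd with ⟨g1, g2⟩ | ⟨g1, g2⟩
    · exact h2 g1
    · exact h1 g1

lemma kdart_inj : Function.Injective (kdart (G := G) (G' := G') (x := x) (y := y) hsplit) := by
  intro p1 p2 hk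
  have h1 := kdart_spec hsplit p1
  have h2 := kdart_spec hsplit p2
  rw [hk] at h1
  apply SimpleGraph.Dart.ext
  have ha : p1.fst = p2.fst := by rw [← h1.1, ← h2.1]
  have hb : p1.snd = p2.snd := by rw [← h1.2, ← h2.2]
  exact Prod.ext ha hb

end adj


open S10Aux

theorem main {V : Type*} [Fintype V] [DecidableEq V] (G : SimpleGraph V) (x y : V)
    (hxy : x ≠ y)
    (h : ∃ G' : SimpleGraph (V ⊕ Bool), IsSplitAt G x y G' ∧
      ∃ R : RotSys G', R.genusLE 0 ∧
        R.CofacialSet {Sum.inl x, Sum.inl y, Sum.inr false, Sum.inr true}) :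
    GenusLE (pinch G x y) 0 := by
  classical
  obtain ⟨G', hsplit, R, hgen, d0, hcof⟩ := h
  have hfinD : Finite G'.Dart := by
    have : Finite ((V ⊕ Bool) × (V ⊕ Bool)) := inferInstance
    exact Finite.of_injective (fun d : G'.Dart => d.toProd)
      (fun d1 d2 h => SimpleGraph.Dart.ext _ _ h)
  have hfinP : Finite (pinch G x y).Dart := by
    have : Finite (V × V) := inferInstance
    exact Finite.of_injective (fun d : (pinch G x y).Dart => d.toProd)
      (fun d1 d2 h => SimpleGraph.Dart.ext _ _ h)
  set ι : Equiv.Perm G'.Dart := dartRev G' with hιdef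
  set σ0 : Equiv.Perm G'.Dart := R.rot with hσ0def
  set E : ℕ := Nat.card G'.edgeSet with hEdef
  have hιapp : ∀ d : G'.Dart, ι d = d.symm := fun d => rfl
  have hιinv : ∀ d : G'.Dart, ι (ι d) = d := fun d => SimpleGraph.Dart.symm_involutive d
  -- initial invariants
  have hfstpow : ∀ (n : ℕ) (d : G'.Dart), ((σ0 ^ n) d).fst = d.fst := by
    intro n d
    induction n with
    | zero => rfl
    | succ i ih =>
      rw [pow_succ', Equiv.Perm.mul_apply]
      rw [← ih]
      exact R.fst_rot _
  have inv2₀ : ∀ d d' : G'.Dart, σ0.SameCycle d d' ↔ d.fst = d'.fst := by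
    intro d d'
    constructor
    · intro hc
      obtain ⟨n, -, hn⟩ := hc.exists_pow_eq'
      rw [← hn]
      exact (hfstpow n d).symm
    · intro hf
      obtain ⟨n, hn⟩ := R.orbit_full d d' hf
      exact ⟨n, by rw [zpow_natCast]; exact hn⟩
  have inv1₀ : ∀ d : G'.Dart, (σ0 d).fst = d.fst := fun d => R.fst_rot d
  have euler₀ : 2 * ncomp σ0 ι + E ≤ ncc (σ0 * ι) + ncc σ0 := by
    have h1 : R.numComps = ncomp σ0 ι := orbit_closure_eq_ncomp σ0 ι
    have h2 : R.numFaces = ncc (σ0 * ι) := orbit_zpowers_eq_ncc _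
    have h3 : R.numVerts = ncc σ0 := orbit_zpowers_eq_ncc _
    have hgen' := hgen
    unfold RotSys.genusLE at hgen'
    omega
  -- cofacial darts
  obtain ⟨m1, hm1⟩ := hcof (Sum.inl x) (by simp)
  obtain ⟨m2, hm2⟩ := hcof (Sum.inr false) (by simp)
  obtain ⟨m3, hm3⟩ := hcof (Sum.inl y) (by simp)
  obtain ⟨m4, hm4⟩ := hcof (Sum.inr true) (by simp)
  set a1 : G'.Dart := (R.facePerm ^ m1) d0 with ha1def
  set a2 : G'.Dart := (R.facePerm ^ m2) d0 with ha2def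
  set a3 : G'.Dart := (R.facePerm ^ m3) d0 with ha3def
  set a4 : G'.Dart := (R.facePerm ^ m4) d0 with ha4def
  have hfa1 : a1.fst = Sum.inl x := hm1
  have hfa2 : a2.fst = Sum.inr false := hm2
  have hfa3 : a3.fst = Sum.inl y := hm3
  have hfa4 : a4.fst = Sum.inr true := hm4
  have hfp : R.facePerm = σ0 * ι := rfl
  have hsc12 : (σ0 * ι).SameCycle a1 a2 := by
    rw [← hfp, ha1def, ha2def]
    exact Equiv.Perm.SameCycle.pow_right (Equiv.Perm.SameCycle.pow_left
      (Equiv.Perm.SameCycle.refl _ _))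
  have hsc13 : (σ0 * ι).SameCycle a1 a3 := by
    rw [← hfp, ha1def, ha3def]
    exact Equiv.Perm.SameCycle.pow_right (Equiv.Perm.SameCycle.pow_left
      (Equiv.Perm.SameCycle.refl _ _))
  have hsc14 : (σ0 * ι).SameCycle a1 a4 := by
    rw [← hfp, ha1def, ha4def]
    exact Equiv.Perm.SameCycle.pow_right (Equiv.Perm.SameCycle.pow_left
      (Equiv.Perm.SameCycle.refl _ _))
  -- helper values of the nu maps
  have hnu1a1 : nu1 x y a1.fst = Sum.inl x := by rw [hfa1]; simp [nu1]
  have hnu1a2 : nu1 x y a2.fst = Sum.inl x := by rw [hfa2]; simp [nu1]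
  have hnu1a3 : nu1 x y a3.fst = Sum.inl y := by rw [hfa3]; simp [nu1]
  have hnu12 : ∀ w : V ⊕ Bool, nu1 x y w = Sum.inl x → nu2 x y w = Sum.inl x := by
    intro w
    unfold nu1 nu2
    split_ifs <;> simp_all
  have hnu2a3 : nu2 x y a3.fst = Sum.inl x := by rw [hfa3]; simp [nu2]
  have hnu2a4 : nu2 x y a4.fst = Sum.inr true := by
    rw [hfa4]; simp [nu2]
  -- merge 1
  have hbt1 : a1.fst ≠ a2.fst := by rw [hfa1, hfa2]; simp
  have hμ'1 : ∀ p r : G'.Dart, nu1 x y p.fst = nu1 x y r.fst ↔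
      (p.fst = r.fst ∨ ((p.fst = a1.fst ∨ p.fst = a2.fst) ∧
        (r.fst = a1.fst ∨ r.fst = a2.fst))) := by
    intro p r
    rw [hfa1, hfa2]
    exact nu1_iff _ _
  obtain ⟨inv1₁, inv2₁, euler₁⟩ := mergeOne (ι := ι) (σ := σ0)
    (μ := fun d : G'.Dart => d.fst) (μ' := fun d : G'.Dart => nu1 x y d.fst) (E := E)
    (b := a1) (t := a2) inv1₀ inv2₀ euler₀ hsc12 hbt1 hμ'1
  set σ1 : Equiv.Perm G'.Dart := Equiv.swap a1 a2 * σ0 with hσ1def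
  have hφ1 : Equiv.swap a1 a2 * (σ0 * ι) = σ1 * ι := (mul_assoc _ _ _).symm
  rw [show Equiv.swap a1 a2 * σ0 * ι = σ1 * ι from rfl] at euler₁
  -- cofacial witnesses after merge 1
  have hJ13 := sameCycle_joinPair (σ := σ0 * ι) a1 a2 hsc13
  rw [hφ1] at hJ13
  obtain ⟨b2, hb2μ, hb2face⟩ : ∃ b, nu1 x y b.fst = Sum.inl x ∧ (σ1 * ι).SameCycle b a3 := by
    rcases hJ13 with h | ⟨h1, h2⟩ | ⟨h1, h2⟩
    · exact ⟨a1, hnu1a1, h⟩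
    · exact ⟨a2, hnu1a2, h2⟩
    · exact ⟨a1, hnu1a1, h2⟩
  have hJ14 := sameCycle_joinPair (σ := σ0 * ι) a1 a2 hsc14
  rw [hφ1] at hJ14
  obtain ⟨b4', hb4'μ, hb4'face⟩ : ∃ b, nu1 x y b.fst = Sum.inl x ∧ (σ1 * ι).SameCycle b a4 := by
    rcases hJ14 with h | ⟨h1, h2⟩ | ⟨h1, h2⟩
    · exact ⟨a1, hnu1a1, h⟩
    · exact ⟨a2, hnu1a2, h2⟩
    · exact ⟨a1, hnu1a1, h2⟩
  -- merge 2
  have hbt2 : nu1 x y b2.fst ≠ nu1 x y a3.fst := by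
    rw [hb2μ, hnu1a3]
    simp [hxy]
  have hμ'2 : ∀ p r : G'.Dart, nu2 x y p.fst = nu2 x y r.fst ↔
      (nu1 x y p.fst = nu1 x y r.fst ∨
        ((nu1 x y p.fst = nu1 x y b2.fst ∨ nu1 x y p.fst = nu1 x y a3.fst) ∧
         (nu1 x y r.fst = nu1 x y b2.fst ∨ nu1 x y r.fst = nu1 x y a3.fst))) := by
    intro p r
    rw [hb2μ, hnu1a3]
    exact nu2_iff hxy _ _
  obtain ⟨inv1₂, inv2₂, euler₂⟩ := mergeOne (ι := ι) (σ := σ1)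
    (μ := fun d : G'.Dart => nu1 x y d.fst) (μ' := fun d : G'.Dart => nu2 x y d.fst) (E := E)
    (b := b2) (t := a3) inv1₁ inv2₁ euler₁ hb2face hbt2 hμ'2
  set σ2 : Equiv.Perm G'.Dart := Equiv.swap b2 a3 * σ1 with hσ2def
  have hφ2 : Equiv.swap b2 a3 * (σ1 * ι) = σ2 * ι := (mul_assoc _ _ _).symm
  rw [show Equiv.swap b2 a3 * σ1 * ι = σ2 * ι from rfl] at euler₂
  -- cofacial witness after merge 2
  have hJ24 := sameCycle_joinPair (σ := σ1 * ι) b2 a3 hb4'face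
  rw [hφ2] at hJ24
  obtain ⟨b4, hb4μ, hb4face⟩ : ∃ b, nu2 x y b.fst = Sum.inl x ∧ (σ2 * ι).SameCycle b a4 := by
    rcases hJ24 with h | ⟨h1, h2⟩ | ⟨h1, h2⟩
    · exact ⟨b4', hnu12 _ hb4'μ, h⟩
    · exact ⟨a3, hnu2a3, h2⟩
    · exact ⟨b2, hnu12 _ hb2μ, h2⟩
  -- merge 3
  have hbt3 : nu2 x y b4.fst ≠ nu2 x y a4.fst := by
    rw [hb4μ, hnu2a4]
    simp
  have hμ'3 : ∀ p r : G'.Dart, nu3 x y p.fst = nu3 x y r.fst ↔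
      (nu2 x y p.fst = nu2 x y r.fst ∨
        ((nu2 x y p.fst = nu2 x y b4.fst ∨ nu2 x y p.fst = nu2 x y a4.fst) ∧
         (nu2 x y r.fst = nu2 x y b4.fst ∨ nu2 x y r.fst = nu2 x y a4.fst))) := by
    intro p r
    rw [hb4μ, hnu2a4]
    exact nu3_iff hxy _ _
  obtain ⟨inv1₃, inv2₃, euler₃⟩ := mergeOne (ι := ι) (σ := σ2)
    (μ := fun d : G'.Dart => nu2 x y d.fst) (μ' := fun d : G'.Dart => nu3 x y d.fst) (E := E)
    (b := b4) (t := a4) inv1₂ inv2₂ euler₂ hb4face hbt3 hμ'3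
  set σ3 : Equiv.Perm G'.Dart := Equiv.swap b4 a4 * σ2 with hσ3def
  rw [show Equiv.swap b4 a4 * σ2 * ι = σ3 * ι from rfl] at euler₃
  -- deletion phase
  set K : Set G'.Dart := Set.range (kdart hsplit) with hKdef
  obtain ⟨σ4, A4, C4, euler4, hfix4⟩ := deletePhase ι K (fun d : G'.Dart => nu3 x y d.fst) E
    ({d : G'.Dart | d ∉ K ∧ σ3 d ≠ d}.ncard) σ3 le_rfl inv1₃
    (fun d d' _ _ hμ => (inv2₃ d d').mpr hμ) euler₃
  -- K is invariant
  have hKrev : ∀ d : G'.Dart, d ∈ K ↔ ι d ∈ K := by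
    have hfwd : ∀ d : G'.Dart, d ∈ K → ι d ∈ K := by
      rintro d ⟨pd, rfl⟩
      exact ⟨pd.symm, (kdart_symm hsplit pd).trans rfl⟩
    intro d
    constructor
    · exact hfwd d
    · intro h2
      have h3 := hfwd _ h2
      rwa [hιinv] at h3
  have hKσ : ∀ d, d ∈ K ↔ σ4 d ∈ K := mem_iff_of_fixed_compl hfix4
  have hKφ : ∀ d, d ∈ K ↔ (σ4 * ι) d ∈ K := fun d => (hKrev d).trans (hKσ (ι d))
  set σhat := σ4.subtypePerm (fun d => (hKσ d).symm) with hσhatdef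
  set ιhat := ι.subtypePerm (fun d => (hKrev d).symm) with hιhatdef
  set φhat := (σ4 * ι).subtypePerm (fun d => (hKφ d).symm) with hφhatdef
  set σc := σ4.subtypePerm (p := fun x => x ∈ Kᶜ) (fun d => (not_congr (hKσ d)).symm : ∀ d, σ4 d ∈ Kᶜ ↔ d ∈ Kᶜ) with hσcdef
  set ιc := ι.subtypePerm (p := fun x => x ∈ Kᶜ) (fun d => (not_congr (hKrev d)).symm : ∀ d, ι d ∈ Kᶜ ↔ d ∈ Kᶜ) with hιcdef
  set φc := (σ4 * ι).subtypePerm (p := fun x => x ∈ Kᶜ)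
    (fun d => (not_congr (hKφ d)).symm : ∀ d, (σ4 * ι) d ∈ Kᶜ ↔ d ∈ Kᶜ) with hφcdef
  -- counting on the complement
  have hφcval : ∀ k : ↥(Kᶜ), (φc k).val = ι k.val := by
    intro k
    show σ4 (ι k.val) = ι k.val
    exact hfix4 _ ((not_congr (hKrev k.val)).mp k.2)
  have hσcid : ∀ k : ↥(Kᶜ), σc k = k := by
    intro k
    exact Subtype.ext (hfix4 k.val k.2)
  have hιcinv : ∀ k : ↥(Kᶜ), ιc (ιc k) = k := fun k => Subtype.ext (hιinv k.val)
  have hφcιc : ∀ k : ↥(Kᶜ), φc k = ιc k := fun k => Subtype.ext (hφcval k)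
  have hφcinv : ∀ k : ↥(Kᶜ), φc (φc k) = k := by
    intro k
    rw [hφcιc, hφcιc]
    exact hιcinv k
  have hφcnf : ∀ k : ↥(Kᶜ), φc k ≠ k := by
    intro k hk
    have := congrArg Subtype.val hk
    rw [hφcval] at this
    exact SimpleGraph.Dart.symm_ne k.val this
  set t := ncc φc with htdef
  have hvc : ncc σc = Nat.card ↥(Kᶜ) := ncc_of_id hσcid
  have hKc2 : Nat.card ↥(Kᶜ) = 2 * t :=
    card_eq_two_mul_ncs_pair (fun k => φc k) hφcinv hφcnf
      (s := scs φc) (fun a b => sameCycle_iff_pair hφcinv a b)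
  have hcc : ncomp σc ιc = t := by
    refine ncs_congr_rel (fun a b => ?_)
    rw [show (compSetoid σc ιc) a b ↔ (b = a ∨ b = ιc a) from comp_iff_pair hσcid hιcinv a b]
    rw [show (scs φc) a b ↔ (b = a ∨ b = φc a) from sameCycle_iff_pair hφcinv a b]
    rw [hφcιc]
  -- splittings
  have hv4 : ncc σ4 = ncc σhat + ncc σc := ncc_split σ4 K hKσ
  have hf4 : ncc (σ4 * ι) = ncc φhat + t := by
    rw [ncc_split (σ4 * ι) K hKφ]
  have hc4 : ncomp σ4 ι = ncomp σhat ιhat + t := by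
    rw [ncomp_split σ4 ι K hKσ hKrev, hcc]
  -- dart counts
  have hdcG : Nat.card G'.Dart = 2 * E := dart_card_eq G'
  set EP := Nat.card (pinch G x y).edgeSet with hEPdef
  have hdcP : Nat.card (pinch G x y).Dart = 2 * EP := dart_card_eq _
  set β := Equiv.ofInjective _ (kdart_inj hsplit) with hβdef
  have hKcard : Nat.card ↥K = 2 * EP := by
    rw [← hdcP]
    exact (Nat.card_congr β).symm
  have hsumc : Nat.card G'.Dart = Nat.card ↥K + Nat.card ↥(Kᶜ) := by
    rw [← Nat.card_sum]
    exact (Nat.card_congr (Equiv.sumCompl (· ∈ K))).symm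
  -- the transported rotation system
  set rotP : Equiv.Perm (pinch G x y).Dart := (β.trans σhat).trans β.symm with hrotPdef
  have hrotPapp : ∀ pd, rotP pd = β.symm (σhat (β pd)) := fun pd => rfl
  have hβval : ∀ pd, (β pd).val = kdart hsplit pd := fun pd => rfl
  have hqβ : ∀ pd, qmap x y (β pd).val.fst = pd.fst ∧ qmap x y (β pd).val.snd = pd.snd :=
    fun pd => kdart_spec hsplit pd
  have hβrev : ∀ pd, (β pd.symm).val = ι ((β pd).val) := by
    intro pd
    rw [hβval, hβval, hιapp]
    exact kdart_symm hsplit pd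
  have hfstsymm : ∀ k : ↥K, (β.symm k).fst = qmap x y k.val.fst := by
    intro k
    obtain ⟨pd, hpd⟩ := β.surjective k
    rw [← hpd, Equiv.symm_apply_apply]
    exact ((hqβ pd).1).symm
  have hfstrotP : ∀ pd, (rotP pd).fst = pd.fst := by
    intro pd
    rw [hrotPapp, hfstsymm]
    have h1 : (σhat (β pd)).val = σ4 (β pd).val := rfl
    rw [h1]
    have h2 : nu3 x y (σ4 (β pd).val).fst = nu3 x y ((β pd).val).fst := A4 _
    have h3 := (nu3_iff_qmap hxy _ _).mp h2
    rw [h3]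
    exact (hqβ pd).1
  have hpowrotP : ∀ (n : ℕ) (pd), (rotP ^ n) pd = β.symm ((σhat ^ n) (β pd)) := by
    intro n pd
    induction n with
    | zero => exact (Equiv.symm_apply_apply _ _).symm
    | succ i ih =>
      rw [pow_succ', pow_succ', Equiv.Perm.mul_apply, Equiv.Perm.mul_apply, ih,
        hrotPapp, Equiv.apply_symm_apply]
  have horbfull : ∀ pd pd' : (pinch G x y).Dart, pd.fst = pd'.fst →
      ∃ n : ℕ, (rotP ^ n) pd = pd' := by
    intro pd pd' hfeq
    have hq : qmap x y (β pd).val.fst = qmap x y (β pd').val.fst := by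
      rw [(hqβ pd).1, (hqβ pd').1, hfeq]
    have hμ : nu3 x y ((β pd).val).fst = nu3 x y ((β pd').val).fst :=
      (nu3_iff_qmap hxy _ _).mpr hq
    have hsc := C4 (β pd).val (β pd').val (β pd).2 (β pd').2 hμ
    obtain ⟨n, -, hn⟩ := hsc.exists_pow_eq'
    refine ⟨n, ?_⟩
    rw [hpowrotP]
    have h5 : (σhat ^ n) (β pd) = β pd' := by
      refine Subtype.ext ?_
      rw [hσhatdef, subtypePerm_pow_val (hτ := hKσ)]
      exact hn
    rw [h5, Equiv.symm_apply_apply]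
  -- transports
  have hT1 : ncc rotP = ncc σhat :=
    ncc_congr β rotP σhat (fun pd => by rw [hrotPapp, Equiv.apply_symm_apply])
  have hT2 : ncc (rotP * dartRev (pinch G x y)) = ncc φhat := by
    refine ncc_congr β _ φhat (fun pd => ?_)
    have h1 : (rotP * dartRev (pinch G x y)) pd = rotP pd.symm := rfl
    rw [h1, hrotPapp, Equiv.apply_symm_apply]
    refine Subtype.ext ?_
    show σ4 (ι ((β pd).val)) = σ4 ((β pd.symm).val)
    rw [hβrev]
  have hT3 : ncomp rotP (dartRev (pinch G x y)) = ncomp σhat ιhat := by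
    refine ncomp_congr β _ _ σhat ιhat
      (fun pd => by rw [hrotPapp, Equiv.apply_symm_apply]) (fun pd => ?_)
    have h1 : (dartRev (pinch G x y)) pd = pd.symm := rfl
    rw [h1]
    exact Subtype.ext (hβrev pd).symm
  -- finish
  refine ⟨⟨rotP, hfstrotP, horbfull⟩, ?_⟩
  unfold RotSys.genusLE
  have hNF : RotSys.numFaces ⟨rotP, hfstrotP, horbfull⟩ = ncc φhat := by
    rw [RotSys.numFaces, orbit_zpowers_eq_ncc]
    exact hT2
  have hNV : RotSys.numVerts ⟨rotP, hfstrotP, horbfull⟩ = ncc σhat := by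
    rw [RotSys.numVerts, orbit_zpowers_eq_ncc]
    exact hT1
  have hNC : RotSys.numComps ⟨rotP, hfstrotP, horbfull⟩ = ncomp σhat ιhat := by
    rw [RotSys.numComps, orbit_closure_eq_ncomp]
    exact hT3
  rw [hNF, hNV, hNC]
  omega

end S10Graph

end S10AuxSection

open AltPaper in
/-- If `G` is non-planar and splitting `x` and `y` yields a planar graph with
`x₁, x₂, y₁, y₂` on a common face, then the graph `G/xy` obtained by identifying `x` and
`y` (and simplifying) is planar. -/
theorem statement_10 {V : Type*} [Fintype V] (G : SimpleGraph V) (x y : V) (hxy : x ≠ y)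
    (hnp : ¬ GenusLE G 0)
    (h : ∃ G' : SimpleGraph (V ⊕ Bool), IsSplitAt G x y G' ∧
      ∃ R : RotSys G', R.genusLE 0 ∧
        R.CofacialSet {Sum.inl x, Sum.inl y, Sum.inr false, Sum.inr true}) :
    GenusLE (pinch G x y) 0 := by
  classical
  letI : DecidableEq V := Classical.decEq V
  exact S10Graph.main G x y hxy h
end

section
/- Let G be a graph with terminals x, y that is an obstruction for the class A^k_{xy} (i.e., G ∉ A^k_{xy} but every single edge deletion or contraction lands in A^k_{xy}), and suppose G does not embed into S_k. Then xy ∉ E(G), and G is a minimal (topological) obstruction for S_k: G does not embed in S_k but G - e embeds in S_k for every edge e. -/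
open SimpleGraph

namespace AltProof

open Equiv

variable {α : Type*}

section SO

variable [Finite α] [DecidableEq α]

def soRel (π : Equiv.Perm α) (a b : α) : Prop := ∃ n : ℕ, (π ^ n) a = b

lemma soRel_refl (π : Perm α) (a : α) : soRel π a a := ⟨0, rfl⟩

lemma soRel_step (π : Perm α) (a : α) : soRel π a (π a) := ⟨1, by simp⟩

lemma soRel_trans {π : Perm α} {a b c : α} (h1 : soRel π a b) (h2 : soRel π b c) :
    soRel π a c := by
  obtain ⟨m, hm⟩ := h1; obtain ⟨n, hn⟩ := h2
  exact ⟨n + m, by rw [pow_add, Perm.mul_apply, hm, hn]⟩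

lemma exists_pos_period (π : Perm α) (a : α) : ∃ d : ℕ, 0 < d ∧ (π ^ d) a = a := by
  have key : ∀ i j : ℕ, i < j → (π ^ i) a = (π ^ j) a → ∃ d : ℕ, 0 < d ∧ (π ^ d) a = a := by
    intro i j hij heq
    refine ⟨j - i, Nat.sub_pos_of_lt hij, ?_⟩
    have h1 : (π ^ i) ((π ^ (j - i)) a) = (π ^ i) a := by
      rw [← Perm.mul_apply, ← pow_add]
      have hji : i + (j - i) = j := by omega
      rw [hji, ← heq]
    exact (π ^ i).injective h1
  obtain ⟨i, j, hne, hij⟩ := Finite.exists_ne_map_eq_of_infinite (fun n : ℕ => (π ^ n) a)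
  rcases lt_or_gt_of_ne hne with h | h
  · exact key i j h hij
  · exact key j i h hij.symm

lemma soRel_symm {π : Perm α} {a b : α} (h : soRel π a b) : soRel π b a := by
  obtain ⟨n, hn⟩ := h
  obtain ⟨d, hd, hda⟩ := exists_pos_period π a
  have hmul : ∀ k : ℕ, (π ^ (k * d)) a = a := by
    intro k
    induction k with
    | zero => simp
    | succ k ih =>
      have : (k + 1) * d = k * d + d := by ring
      rw [this, pow_add, Perm.mul_apply, hda, ih]
  have hle : n ≤ n * d := Nat.le_mul_of_pos_right n hd
  refine ⟨n * d - n, ?_⟩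
  rw [← hn, ← Perm.mul_apply, ← pow_add]
  rw [Nat.sub_add_cancel hle]
  exact hmul n

def soSetoid (π : Perm α) : Setoid α :=
  ⟨soRel π, ⟨soRel_refl π, soRel_symm, soRel_trans⟩⟩

noncomputable def nq (π : Perm α) : ℕ := Nat.card (Quotient (soSetoid π))

lemma card_quot_le {r s : Setoid α} (h : ∀ a b, r a b → s a b) :
    Nat.card (Quotient s) ≤ Nat.card (Quotient r) := by
  have hs : Function.Surjective (Quotient.map' (s₁ := r) (s₂ := s) id (fun a b hab => h a b hab)) := by
    intro q
    induction q using Quotient.inductionOn' with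
    | h a => exact ⟨Quotient.mk'' a, rfl⟩
  exact Nat.card_le_card_of_surjective _ hs

lemma card_succ_le_of_surj_collision {A B : Type*} [Finite A] (f : A → B)
    (hf : Function.Surjective f) {a₀ a₁ : A} (h01 : a₀ ≠ a₁) (hcol : f a₀ = f a₁) :
    Nat.card B + 1 ≤ Nat.card A := by
  classical
  have : Finite B := Finite.of_surjective f hf
  have hsi : ∀ c : B, f (Function.surjInv hf c) = c := fun c => Function.surjInv_eq hf c
  let j : B ⊕ Unit → A := fun z =>
    match z with
    | Sum.inl c => if c = f a₀ then a₀ else Function.surjInv hf c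
    | Sum.inr _ => a₁
  have hjl : ∀ c : B, f (j (Sum.inl c)) = c := by
    intro c
    show f (if c = f a₀ then a₀ else Function.surjInv hf c) = c
    split_ifs with h
    · rw [h]
    · exact hsi c
  have hjne : ∀ c : B, j (Sum.inl c) ≠ a₁ := by
    intro c h
    by_cases hc : c = f a₀
    · have : j (Sum.inl c) = a₀ := by simp [j, hc]
      exact h01 (this.symm.trans h)
    · apply hc
      have := hjl c
      rw [h] at this
      rw [← this, hcol]
  have hinj : Function.Injective j := by
    rintro (c | u) (c' | u') h
    · have : c = c' := by rw [← hjl c, ← hjl c', h]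
      rw [this]
    · exact absurd h (hjne c)
    · exact absurd h.symm (hjne c')
    · rfl
  have := Nat.card_le_card_of_injective j hinj
  simpa [Nat.card_sum] using this

lemma card_le_succ_of_inj_collision {A B : Type*} [Finite B] (f : A → B) {a₀ a₁ : A}
    (hinj : ∀ u w, f u = f w → u = w ∨ (u = a₀ ∧ w = a₁) ∨ (u = a₁ ∧ w = a₀)) :
    Nat.card A ≤ Nat.card B + 1 := by
  classical
  let j : A → B ⊕ Unit := fun u => if u = a₁ then Sum.inr () else Sum.inl (f u)
  have hjinj : Function.Injective j := by
    intro u w h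
    by_cases h1 : u = a₁ <;> by_cases h2 : w = a₁
    · rw [h1, h2]
    · exact absurd (by simp [j, h1, h2] at h) id
    · exact absurd (by simp [j, h1, h2] at h) id
    · have hfe : f u = f w := by
        have : Sum.inl (f u) = (Sum.inl (f w) : B ⊕ Unit) := by
          simpa [j, h1, h2] using h
        exact Sum.inl.inj this
      rcases hinj u w hfe with h' | ⟨_, h'⟩ | ⟨h', _⟩
      · exact h'
      · exact absurd h' h2
      · exact absurd h' h1
  have := Nat.card_le_card_of_injective j hjinj
  simpa [Nat.card_sum] using this

def mRel (π : Perm α) (u v a b : α) : Prop :=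
  soRel π a b ∨ (soRel π a u ∧ soRel π v b) ∨ (soRel π a v ∧ soRel π u b)

lemma mRel_refl (π : Perm α) (u v a : α) : mRel π u v a a := Or.inl (soRel_refl π a)

lemma mRel_symm {π : Perm α} {u v a b : α} (h : mRel π u v a b) : mRel π u v b a := by
  rcases h with h | ⟨h1, h2⟩ | ⟨h1, h2⟩
  · exact Or.inl (soRel_symm h)
  · exact Or.inr (Or.inr ⟨soRel_symm h2, soRel_symm h1⟩)
  · exact Or.inr (Or.inl ⟨soRel_symm h2, soRel_symm h1⟩)

lemma mRel_trans {π : Perm α} {u v a b c : α} (h1 : mRel π u v a b) (h2 : mRel π u v b c) :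
    mRel π u v a c := by
  rcases h1 with h1 | ⟨h1a, h1b⟩ | ⟨h1a, h1b⟩ <;>
    rcases h2 with h2 | ⟨h2a, h2b⟩ | ⟨h2a, h2b⟩
  · exact Or.inl (soRel_trans h1 h2)
  · exact Or.inr (Or.inl ⟨soRel_trans h1 h2a, h2b⟩)
  · exact Or.inr (Or.inr ⟨soRel_trans h1 h2a, h2b⟩)
  · exact Or.inr (Or.inl ⟨h1a, soRel_trans h1b h2⟩)
  · exact Or.inr (Or.inl ⟨h1a, h2b⟩)
  · exact Or.inl (soRel_trans h1a h2b)
  · exact Or.inr (Or.inr ⟨h1a, soRel_trans h1b h2⟩)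
  · exact Or.inl (soRel_trans h1a h2b)
  · exact Or.inr (Or.inr ⟨h1a, h2b⟩)

def mSetoid (π : Perm α) (u v : α) : Setoid α :=
  ⟨mRel π u v, ⟨mRel_refl π u v, mRel_symm, mRel_trans⟩⟩

lemma so_mulswap_imp_m {π : Perm α} {u v : α} {a b : α}
    (h : soRel (π * Equiv.swap u v) a b) : mRel π u v a b := by
  obtain ⟨n, hn⟩ := h
  subst hn
  induction n with
  | zero => exact mRel_refl π u v a
  | succ n ih =>
    set c := ((π * Equiv.swap u v) ^ n) a with hc
    have hstep : ((π * Equiv.swap u v) ^ (n + 1)) a = π (Equiv.swap u v c) := by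
      rw [pow_succ', Perm.mul_apply, ← hc, Perm.mul_apply]
    rw [hstep]
    refine mRel_trans ih ?_
    by_cases h1 : c = u
    · rw [h1, Equiv.swap_apply_left]
      exact Or.inr (Or.inl ⟨soRel_refl π u, soRel_step π v⟩)
    · by_cases h2 : c = v
      · rw [h2, Equiv.swap_apply_right]
        exact Or.inr (Or.inr ⟨soRel_refl π v, soRel_step π u⟩)
      · rw [Equiv.swap_apply_of_ne_of_ne h1 h2]
        exact Or.inl (soRel_step π c)

lemma mRel_collapse {π : Perm α} {u v a b : α} (huv : soRel π u v)
    (h : mRel π u v a b) : soRel π a b := by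
  rcases h with h | ⟨h1, h2⟩ | ⟨h1, h2⟩
  · exact h
  · exact soRel_trans (soRel_trans h1 huv) h2
  · exact soRel_trans (soRel_trans h1 (soRel_symm huv)) h2

lemma nq_mul_swap_le (π : Perm α) (u v : α) (huv : u ≠ v) :
    nq (π * Equiv.swap u v) ≤ nq π + 1 := by
  set π' := π * Equiv.swap u v with hπ'
  have hππ' : π = π' * Equiv.swap u v := by
    rw [hπ', mul_assoc, Equiv.swap_mul_self, mul_one]
  -- every soRel π class maps into mRel π' class
  have h1 : ∀ a b, soRel π a b → mRel π' u v a b := by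
    intro a b h
    rw [hππ'] at h
    exact so_mulswap_imp_m h
  have h2 : Nat.card (Quotient (mSetoid π' u v)) ≤ Nat.card (Quotient (soSetoid π)) :=
    card_quot_le (r := soSetoid π) (s := mSetoid π' u v) h1
  have h3 : Nat.card (Quotient (soSetoid π')) ≤ Nat.card (Quotient (mSetoid π' u v)) + 1 := by
    set f : Quotient (soSetoid π') → Quotient (mSetoid π' u v) :=
      Quotient.map' id (fun a b hab => Or.inl hab) with hf
    refine card_le_succ_of_inj_collision f
      (a₀ := Quotient.mk'' u) (a₁ := Quotient.mk'' v) ?_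
    intro U W
    induction U using Quotient.inductionOn' with
    | h p =>
      induction W using Quotient.inductionOn' with
      | h q =>
        intro hpq
        have : mRel π' u v p q := Quotient.exact' hpq
        rcases this with h | ⟨ha, hb⟩ | ⟨ha, hb⟩
        · exact Or.inl (Quotient.sound' h)
        · exact Or.inr (Or.inl ⟨Quotient.sound' ha, Quotient.sound' (soRel_symm hb)⟩)
        · exact Or.inr (Or.inr ⟨Quotient.sound' ha, Quotient.sound' (soRel_symm hb)⟩)
  calc nq π' ≤ Nat.card (Quotient (mSetoid π' u v)) + 1 := h3
    _ ≤ nq π + 1 := by exact Nat.add_le_add_right h2 1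

lemma nq_le_mul_swap (π : Perm α) (u v : α) (huv : u ≠ v) :
    nq π ≤ nq (π * Equiv.swap u v) + 1 := by
  have h := nq_mul_swap_le (π * Equiv.swap u v) u v huv
  rwa [mul_assoc, Equiv.swap_mul_self, mul_one] at h

lemma nq_mul_swap_self (π : Perm α) (u : α) : nq (π * Equiv.swap u u) = nq π := by
  have h : π * Equiv.swap u u = π := by
    apply Equiv.ext
    intro z
    simp [Equiv.swap_self]
  rw [h]

lemma not_soRel_mul_swap {π : Perm α} {u v : α} (huv : u ≠ v) (h : soRel π u v) :
    ¬ soRel (π * Equiv.swap u v) u v := by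
  have hvu := soRel_symm h
  have hP : ∃ n : ℕ, 0 < n ∧ (π ^ n) v = u := by
    obtain ⟨m, hm⟩ := hvu
    refine ⟨m, Nat.pos_of_ne_zero ?_, hm⟩
    intro h0
    apply huv
    rw [h0] at hm
    simpa using hm.symm
  classical
  set n₀ := Nat.find hP with hn₀
  obtain ⟨hn₀pos, hn₀v⟩ := Nat.find_spec hP
  rw [← hn₀] at hn₀pos hn₀v
  set S : α → Prop := fun w => ∃ i, 1 ≤ i ∧ i ≤ n₀ ∧ (π ^ i) v = w with hS
  have huS : S u := ⟨n₀, hn₀pos, le_refl _, hn₀v⟩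
  have hvS : ¬ S v := by
    rintro ⟨i, hi1, hi2, hiv⟩
    rcases eq_or_lt_of_le hi2 with heq | hlt
    · apply huv
      rw [← hn₀v, ← heq, hiv]
    · have : (π ^ (n₀ - i)) v = u := by
        rw [← hiv, ← Perm.mul_apply, ← pow_add]
        have : n₀ - i + i = n₀ := by omega
        rw [this, hn₀v]
      exact Nat.find_min hP (by omega) ⟨by omega, this⟩
  have hclosed : ∀ w, S w → S ((π * Equiv.swap u v) w) := by
    rintro w ⟨i, hi1, hi2, hiv⟩
    by_cases hwu : w = u
    · rw [hwu, Perm.mul_apply, Equiv.swap_apply_left]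
      exact ⟨1, le_refl _, hn₀pos, by simp⟩
    · have hwv : w ≠ v := by
        intro hwv; exact hvS (hwv ▸ ⟨i, hi1, hi2, hiv⟩)
      rw [Perm.mul_apply, Equiv.swap_apply_of_ne_of_ne hwu hwv]
      have hilt : i < n₀ := by
        rcases eq_or_lt_of_le hi2 with heq | hlt
        · exfalso; apply hwu; rw [← hiv, heq, hn₀v]
        · exact hlt
      exact ⟨i + 1, by omega, by omega, by rw [pow_succ', Perm.mul_apply, hiv]⟩
  have horbit : ∀ n : ℕ, S (((π * Equiv.swap u v) ^ n) u) := by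
    intro n
    induction n with
    | zero => exact huS
    | succ n ih =>
      rw [pow_succ', Perm.mul_apply]
      exact hclosed _ ih
  rintro ⟨n, hn⟩
  exact hvS (hn ▸ horbit n)

lemma nq_mul_swap_ge {π : Perm α} {u v : α} (huv : u ≠ v) (h : soRel π u v) :
    nq π + 1 ≤ nq (π * Equiv.swap u v) := by
  set π' := π * Equiv.swap u v with hπ'
  have hincl : ∀ a b, soRel π' a b → soRel π a b := by
    intro a b hab
    exact mRel_collapse h (so_mulswap_imp_m hab)
  set F : Quotient (soSetoid π') → Quotient (soSetoid π) :=
    Quotient.map' id (fun a b hab => hincl a b hab) with hF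
  have hsurj : Function.Surjective F := by
    intro q
    induction q using Quotient.inductionOn' with
    | h a => exact ⟨Quotient.mk'' a, rfl⟩
  have hne : (Quotient.mk'' u : Quotient (soSetoid π')) ≠ Quotient.mk'' v := by
    intro heq
    exact not_soRel_mul_swap huv h (Quotient.exact' heq)
  have hcol : F (Quotient.mk'' u) = F (Quotient.mk'' v) := Quotient.sound' h
  exact card_succ_le_of_surj_collision F hsurj hne hcol

lemma nq_eq_card_orbitRel (π : Perm α) :
    Nat.card (MulAction.orbitRel.Quotient (Subgroup.zpowers π) α) = nq π := by
  have hiff : ∀ a b : α, (MulAction.orbitRel (Subgroup.zpowers π) α) a b ↔ soRel π a b := by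
    intro a b
    rw [MulAction.orbitRel_apply, MulAction.mem_orbit_iff]
    constructor
    · rintro ⟨⟨g, hg⟩, hgb⟩
      obtain ⟨k, hk⟩ := Subgroup.mem_zpowers_iff.mp hg
      have hgb' : (π ^ k) b = a := by
        rw [hk]; exact hgb
      rcases le_or_gt 0 k with hk0 | hk0
      · apply soRel_symm
        refine ⟨k.toNat, ?_⟩
        rw [← hgb']
        congr 1
        rw [← zpow_natCast]
        congr 1
        omega
      · refine ⟨(-k).toNat, ?_⟩
        have : (π ^ (-k)) a = b := by
          rw [← hgb', ← Perm.mul_apply, ← zpow_add]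
          simp
        rw [← this]
        congr 1
        rw [← zpow_natCast]
        congr 1
        omega
    · rintro ⟨n, hn⟩
      refine ⟨⟨π ^ (-(n : ℤ)), Subgroup.mem_zpowers_iff.mpr ⟨-(n : ℤ), rfl⟩⟩, ?_⟩
      show (π ^ (-(n : ℤ))) b = a
      rw [← hn, ← Perm.mul_apply, ← zpow_natCast π n, ← zpow_add]
      simp
  have h1 : Nat.card (Quotient (soSetoid π)) ≤
      Nat.card (MulAction.orbitRel.Quotient (Subgroup.zpowers π) α) :=
    card_quot_le (r := MulAction.orbitRel (Subgroup.zpowers π) α) (s := soSetoid π)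
      (fun a b hab => (hiff a b).mp hab)
  have h2 : Nat.card (MulAction.orbitRel.Quotient (Subgroup.zpowers π) α) ≤
      Nat.card (Quotient (soSetoid π)) :=
    card_quot_le (r := soSetoid π) (s := MulAction.orbitRel (Subgroup.zpowers π) α)
      (fun a b hab => (hiff a b).mpr hab)
  exact le_antisymm h2 h1


lemma soRel_mono {π ρ : Perm α} (h : ∀ d, soRel ρ d (π d)) {a b : α}
    (hab : soRel π a b) : soRel ρ a b := by
  obtain ⟨n, hn⟩ := hab
  subst hn
  induction n with
  | zero => exact soRel_refl ρ a
  | succ n ih =>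
    have hp : (π ^ (n + 1)) a = π ((π ^ n) a) := by rw [pow_succ', Perm.mul_apply]
    rw [hp]
    exact soRel_trans ih (h _)

end SO

end AltProof
namespace AltProof

open AltPaper SimpleGraph Equiv

section Graph

variable {V : Type*} [Fintype V] {G : SimpleGraph V} {x y : V}

attribute [local instance] Classical.propDecidable

instance dartFinite (G : SimpleGraph V) : Finite G.Dart :=
  Finite.of_injective (fun d => d.toProd) (fun a b h => SimpleGraph.Dart.ext a b h)

abbrev HH (G : SimpleGraph V) (x y : V) : SimpleGraph V := G.deleteEdges {s(x, y)}

def ιD (G : SimpleGraph V) (x y : V) : (HH G x y).Dart ↪ G.Dart where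
  toFun d := ⟨d.toProd, ((SimpleGraph.deleteEdges_adj).mp d.adj).1⟩
  inj' a b h := by
    apply SimpleGraph.Dart.ext
    have := congrArg SimpleGraph.Dart.toProd h
    exact this

lemma ι_fst (z : (HH G x y).Dart) : (ιD G x y z).fst = z.fst := rfl

lemma ι_edge_ne (z : (HH G x y).Dart) : (ιD G x y z).edge ≠ s(x, y) := by
  have h := ((SimpleGraph.deleteEdges_adj).mp z.adj).2
  intro hc
  exact h (Set.mem_singleton_iff.mpr hc)

lemma mem_range_ι (d : G.Dart) : d ∈ Set.range (ιD G x y) ↔ d.edge ≠ s(x, y) := by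
  constructor
  · rintro ⟨z, rfl⟩
    exact ι_edge_ne z
  · intro h
    refine ⟨⟨d.toProd, SimpleGraph.deleteEdges_adj.mpr ⟨d.adj, ?_⟩⟩, ?_⟩
    · intro hc
      exact h (Set.mem_singleton_iff.mp hc)
    · exact SimpleGraph.Dart.ext _ _ rfl

def dXY (hxy : G.Adj x y) : G.Dart := ⟨(x, y), hxy⟩
def dYX (hxy : G.Adj x y) : G.Dart := ⟨(y, x), hxy.symm⟩

lemma dXY_fst (hxy : G.Adj x y) : (dXY hxy).fst = x := rfl
lemma dYX_fst (hxy : G.Adj x y) : (dYX hxy).fst = y := rfl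
lemma dXY_edge (hxy : G.Adj x y) : (dXY hxy).edge = s(x, y) := rfl
lemma dYX_edge (hxy : G.Adj x y) : (dYX hxy).edge = s(x, y) := Sym2.eq_swap

lemma dXY_ne_dYX (hxy : G.Adj x y) : dXY hxy ≠ dYX hxy := by
  intro h
  exact hxy.ne (congrArg (fun d : G.Dart => d.fst) h)

lemma edge_cases (hxy : G.Adj x y) {d : G.Dart} (h : d.edge = s(x, y)) :
    d = dXY hxy ∨ d = dYX hxy := by
  rcases (Sym2.mk_eq_mk_iff (p := d.toProd) (q := (x, y))).mp h with h' | h'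
  · exact Or.inl (SimpleGraph.Dart.ext _ _ h')
  · exact Or.inr (SimpleGraph.Dart.ext _ _ h')

lemma ι_ne_dXY (hxy : G.Adj x y) (z : (HH G x y).Dart) : ιD G x y z ≠ dXY hxy := by
  intro h
  exact ι_edge_ne z (h ▸ dXY_edge hxy)

lemma ι_ne_dYX (hxy : G.Adj x y) (z : (HH G x y).Dart) : ιD G x y z ≠ dYX hxy := by
  intro h
  exact ι_edge_ne z (h ▸ dYX_edge hxy)

/-! ### The extended permutation σ -/

noncomputable def σP (R : RotSys (HH G x y)) : Perm G.Dart :=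
  R.rot.viaEmbedding (ιD G x y)

lemma σ_ι (R : RotSys (HH G x y)) (z : (HH G x y).Dart) :
    σP R (ιD G x y z) = ιD G x y (R.rot z) :=
  Perm.viaEmbedding_apply _ _ z

lemma σ_new (R : RotSys (HH G x y)) {d : G.Dart} (h : d.edge = s(x, y)) : σP R d = d := by
  apply Perm.viaEmbedding_apply_of_notMem
  intro hmem
  exact (mem_range_ι d).mp hmem h

lemma σ_dXY (R : RotSys (HH G x y)) (hxy : G.Adj x y) : σP R (dXY hxy) = dXY hxy :=
  σ_new R (dXY_edge hxy)

lemma σ_dYX (R : RotSys (HH G x y)) (hxy : G.Adj x y) : σP R (dYX hxy) = dYX hxy :=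
  σ_new R (dYX_edge hxy)

lemma σ_pow_ι (R : RotSys (HH G x y)) (n : ℕ) (z : (HH G x y).Dart) :
    (σP R ^ n) (ιD G x y z) = ιD G x y ((R.rot ^ n) z) := by
  induction n with
  | zero => rfl
  | succ n ih =>
    rw [pow_succ', Perm.mul_apply, ih, σ_ι, pow_succ' R.rot, Perm.mul_apply]

lemma σ_pow_dXY (R : RotSys (HH G x y)) (hxy : G.Adj x y) (n : ℕ) :
    (σP R ^ n) (dXY hxy) = dXY hxy := by
  induction n with
  | zero => rfl
  | succ n ih =>
    rw [pow_succ', Perm.mul_apply, ih, σ_dXY]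

lemma σ_fst (R : RotSys (HH G x y)) (d : G.Dart) : (σP R d).fst = d.fst := by
  by_cases h : d.edge = s(x, y)
  · rw [σ_new R h]
  · obtain ⟨z, rfl⟩ := (mem_range_ι d).mpr h
    rw [σ_ι]
    show (R.rot z).fst = z.fst
    exact R.fst_rot z

/-! ### The extended face permutation -/

noncomputable def φT (R : RotSys (HH G x y)) : Perm G.Dart := σP R * dartRev G

lemma dartRev_apply (d : G.Dart) : dartRev G d = d.symm := rfl

lemma rev_ι (z : (HH G x y).Dart) :
    dartRev G (ιD G x y z) = ιD G x y (dartRev (HH G x y) z) := rfl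

lemma rev_dXY (hxy : G.Adj x y) : dartRev G (dXY hxy) = dYX hxy := rfl
lemma rev_dYX (hxy : G.Adj x y) : dartRev G (dYX hxy) = dXY hxy := rfl

lemma rev_rev (d : G.Dart) : dartRev G (dartRev G d) = d :=
  SimpleGraph.Dart.symm_involutive d

lemma φ_ι (R : RotSys (HH G x y)) (z : (HH G x y).Dart) :
    φT R (ιD G x y z) = ιD G x y (R.facePerm z) := by
  show σP R (dartRev G (ιD G x y z)) = _
  rw [rev_ι, σ_ι]
  rfl

lemma φ_pow_ι (R : RotSys (HH G x y)) (n : ℕ) (z : (HH G x y).Dart) :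
    (φT R ^ n) (ιD G x y z) = ιD G x y ((R.facePerm ^ n) z) := by
  induction n with
  | zero => rfl
  | succ n ih =>
    rw [pow_succ', Perm.mul_apply, ih, φ_ι, pow_succ', Perm.mul_apply]

lemma φ_dXY (R : RotSys (HH G x y)) (hxy : G.Adj x y) : φT R (dXY hxy) = dYX hxy := by
  show σP R (dartRev G (dXY hxy)) = _
  rw [rev_dXY, σ_dYX]

lemma φ_dYX (R : RotSys (HH G x y)) (hxy : G.Adj x y) : φT R (dYX hxy) = dXY hxy := by
  show σP R (dartRev G (dYX hxy)) = _
  rw [rev_dYX, σ_dXY]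

/-! ### The modified rotation -/

noncomputable def mkRot (hxy : G.Adj x y) (R : RotSys (HH G x y)) (a b : G.Dart) :
    Perm G.Dart :=
  σP R * Equiv.swap a (dXY hxy) * Equiv.swap b (dYX hxy)

lemma mkRot_apply (hxy : G.Adj x y) (R : RotSys (HH G x y)) (a b : G.Dart) (d : G.Dart) :
    mkRot hxy R a b d = σP R (Equiv.swap a (dXY hxy) (Equiv.swap b (dYX hxy) d)) := rfl

variable (hxy : G.Adj x y) (R : RotSys (HH G x y))

lemma ne_ab {a b : G.Dart} (hxy : G.Adj x y) (ha1 : a.fst = x) (hb1 : b.fst = y) : a ≠ b := by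
  intro h
  apply hxy.ne
  rw [← ha1, ← hb1, h]

lemma ne_a_dYX {a : G.Dart} (hxy : G.Adj x y) (ha1 : a.fst = x) : a ≠ dYX hxy := by
  intro h
  apply hxy.ne
  rw [← ha1, h, dYX_fst]

lemma ne_b_dXY {b : G.Dart} (hxy : G.Adj x y) (hb1 : b.fst = y) : b ≠ dXY hxy := by
  intro h
  apply hxy.ne
  rw [← hb1, h, dXY_fst]

lemma K_a (hxy : G.Adj x y) (R : RotSys (HH G x y)) {a b : G.Dart}
    (ha1 : a.fst = x) (hb1 : b.fst = y) : mkRot hxy R a b a = dXY hxy := by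
  rw [mkRot_apply, Equiv.swap_apply_of_ne_of_ne (ne_ab hxy ha1 hb1) (ne_a_dYX hxy ha1),
    Equiv.swap_apply_left, σ_dXY]

lemma K_dxy (hxy : G.Adj x y) (R : RotSys (HH G x y)) {a b : G.Dart}
    (hb1 : b.fst = y) : mkRot hxy R a b (dXY hxy) = σP R a := by
  rw [mkRot_apply, Equiv.swap_apply_of_ne_of_ne (Ne.symm (ne_b_dXY hxy hb1)) (dXY_ne_dYX hxy),
    Equiv.swap_apply_right]

lemma K_b (hxy : G.Adj x y) (R : RotSys (HH G x y)) {a b : G.Dart}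
    (ha1 : a.fst = x) : mkRot hxy R a b b = dYX hxy := by
  rw [mkRot_apply, Equiv.swap_apply_left,
    Equiv.swap_apply_of_ne_of_ne (Ne.symm (ne_a_dYX hxy ha1)) (Ne.symm (dXY_ne_dYX hxy)),
    σ_dYX]

lemma K_dyx (hxy : G.Adj x y) (R : RotSys (HH G x y)) {a b : G.Dart}
    (ha1 : a.fst = x) (hb1 : b.fst = y) : mkRot hxy R a b (dYX hxy) = σP R b := by
  rw [mkRot_apply, Equiv.swap_apply_right,
    Equiv.swap_apply_of_ne_of_ne (Ne.symm (ne_ab hxy ha1 hb1)) (ne_b_dXY hxy hb1)]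

lemma K_other (hxy : G.Adj x y) (R : RotSys (HH G x y)) {a b d : G.Dart}
    (hd1 : d ≠ a) (hd2 : d ≠ b) (hd3 : d ≠ dXY hxy)
    (hd4 : d ≠ dYX hxy) : mkRot hxy R a b d = σP R d := by
  rw [mkRot_apply, Equiv.swap_apply_of_ne_of_ne hd2 hd4, Equiv.swap_apply_of_ne_of_ne hd1 hd3]

lemma mkRot_fst (hxy : G.Adj x y) (R : RotSys (HH G x y)) {a b : G.Dart}
    (ha1 : a.fst = x) (hb1 : b.fst = y) (d : G.Dart) :
    (mkRot hxy R a b d).fst = d.fst := by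
  by_cases h1 : d = dXY hxy
  · rw [h1, K_dxy hxy R hb1, σ_fst, ha1, dXY_fst]
  by_cases h2 : d = dYX hxy
  · rw [h2, K_dyx hxy R ha1 hb1, σ_fst, hb1, dYX_fst]
  by_cases h3 : d = a
  · rw [h3, K_a hxy R ha1 hb1, dXY_fst, ha1]
  by_cases h4 : d = b
  · rw [h4, K_b hxy R ha1, dYX_fst, hb1]
  · rw [K_other hxy R h3 h4 h1 h2, σ_fst]

lemma soRel_mkRot_σ (hxy : G.Adj x y) (R : RotSys (HH G x y)) {a b : G.Dart}
    (ha1 : a.fst = x) (hb1 : b.fst = y) (d : G.Dart) :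
    soRel (mkRot hxy R a b) d (σP R d) := by
  by_cases h1 : d = dXY hxy
  · rw [h1, σ_dXY]
    exact soRel_refl _ _
  by_cases h2 : d = dYX hxy
  · rw [h2, σ_dYX]
    exact soRel_refl _ _
  by_cases h3 : d = a
  · refine ⟨2, ?_⟩
    rw [h3, pow_two, Perm.mul_apply, K_a hxy R ha1 hb1, K_dxy hxy R hb1]
  by_cases h4 : d = b
  · refine ⟨2, ?_⟩
    rw [h4, pow_two, Perm.mul_apply, K_b hxy R ha1, K_dyx hxy R ha1 hb1]
  · refine ⟨1, ?_⟩
    rw [pow_one, K_other hxy R h3 h4 h1 h2]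

lemma soRel_mkRot_of_σ (hxy : G.Adj x y) (R : RotSys (HH G x y)) {a b : G.Dart}
    (ha1 : a.fst = x) (hb1 : b.fst = y) {d d' : G.Dart} (h : soRel (σP R) d d') :
    soRel (mkRot hxy R a b) d d' :=
  soRel_mono (soRel_mkRot_σ hxy R ha1 hb1) h

lemma soRel_σ_old (R : RotSys (HH G x y)) {z z' : (HH G x y).Dart} (hf : z.fst = z'.fst) :
    soRel (σP R) (ιD G x y z) (ιD G x y z') := by
  obtain ⟨n, hn⟩ := R.orbit_full z z' hf
  exact ⟨n, by rw [σ_pow_ι, hn]⟩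

lemma a_old_or (hxy : G.Adj x y) {a : G.Dart} (ha1 : a.fst = x)
    (haIso : a = dXY hxy → ∀ z : (HH G x y).Dart, z.fst ≠ x) :
    a = dXY hxy ∨ a.edge ≠ s(x, y) := by
  by_cases h : a.edge = s(x, y)
  · left
    rcases edge_cases hxy h with h' | h'
    · exact h'
    · exfalso
      apply hxy.ne
      rw [← ha1, h', dYX_fst]
  · right; exact h

lemma b_old_or (hxy : G.Adj x y) {b : G.Dart} (hb1 : b.fst = y)
    (hbIso : b = dYX hxy → ∀ z : (HH G x y).Dart, z.fst ≠ y) :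
    b = dYX hxy ∨ b.edge ≠ s(x, y) := by
  by_cases h : b.edge = s(x, y)
  · left
    rcases edge_cases hxy h with h' | h'
    · exfalso
      apply hxy.ne
      rw [← hb1, h', dXY_fst]
    · exact h'
  · right; exact h

lemma reach_dXY (hxy : G.Adj x y) (R : RotSys (HH G x y)) {a b : G.Dart}
    (ha1 : a.fst = x) (hb1 : b.fst = y)
    (haIso : a = dXY hxy → ∀ z : (HH G x y).Dart, z.fst ≠ x)
    {z : (HH G x y).Dart} (hz : z.fst = x) :
    soRel (mkRot hxy R a b) (ιD G x y z) (dXY hxy) := by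
  rcases a_old_or hxy ha1 haIso with h | h
  · exact absurd hz (haIso h z)
  · obtain ⟨za, rfl⟩ := (mem_range_ι a).mpr h
    have hza : z.fst = za.fst := by
      rw [ι_fst] at ha1
      rw [hz, ha1]
    have h1 : soRel (σP R) (ιD G x y z) (ιD G x y za) := soRel_σ_old R hza
    have h2 : soRel (mkRot hxy R (ιD G x y za) b) (ιD G x y z) (ιD G x y za) :=
      soRel_mkRot_of_σ hxy R ha1 hb1 h1
    refine soRel_trans h2 ⟨1, ?_⟩
    rw [pow_one]
    exact K_a hxy R ha1 hb1

lemma reach_dYX (hxy : G.Adj x y) (R : RotSys (HH G x y)) {a b : G.Dart}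
    (ha1 : a.fst = x) (hb1 : b.fst = y)
    (hbIso : b = dYX hxy → ∀ z : (HH G x y).Dart, z.fst ≠ y)
    {z : (HH G x y).Dart} (hz : z.fst = y) :
    soRel (mkRot hxy R a b) (ιD G x y z) (dYX hxy) := by
  rcases b_old_or hxy hb1 hbIso with h | h
  · exact absurd hz (hbIso h z)
  · obtain ⟨zb, rfl⟩ := (mem_range_ι b).mpr h
    have hzb : z.fst = zb.fst := by
      rw [ι_fst] at hb1
      rw [hz, hb1]
    have h1 : soRel (σP R) (ιD G x y z) (ιD G x y zb) := soRel_σ_old R hzb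
    have h2 : soRel (mkRot hxy R a (ιD G x y zb)) (ιD G x y z) (ιD G x y zb) :=
      soRel_mkRot_of_σ hxy R ha1 hb1 h1
    refine soRel_trans h2 ⟨1, ?_⟩
    rw [pow_one]
    exact K_b hxy R ha1


noncomputable def mkRS (hxy : G.Adj x y) (R : RotSys (HH G x y)) (a b : G.Dart)
    (ha1 : a.fst = x) (hb1 : b.fst = y)
    (haIso : a = dXY hxy → ∀ z : (HH G x y).Dart, z.fst ≠ x)
    (hbIso : b = dYX hxy → ∀ z : (HH G x y).Dart, z.fst ≠ y) : RotSys G where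
  rot := mkRot hxy R a b
  fst_rot := mkRot_fst hxy R ha1 hb1
  orbit_full := by
    intro d d' hdd
    show soRel (mkRot hxy R a b) d d'
    have hsym : ∀ p q : G.Dart, soRel (mkRot hxy R a b) p q → soRel (mkRot hxy R a b) q p :=
      fun p q h => soRel_symm h
    -- case analysis on whether d, d' are old or new
    by_cases h1 : d.edge = s(x, y) <;> by_cases h2 : d'.edge = s(x, y)
    · -- both new
      rcases edge_cases hxy h1 with e1 | e1 <;> rcases edge_cases hxy h2 with e2 | e2 <;>
        subst e1 <;> subst e2
      · exact soRel_refl _ _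
      · exact absurd hdd hxy.ne
      · exact absurd hdd (fun h => hxy.ne h.symm)
      · exact soRel_refl _ _
    · -- d new, d' old
      apply hsym
      obtain ⟨z, rfl⟩ := (mem_range_ι d').mpr h2
      rcases edge_cases hxy h1 with e1 | e1 <;> subst e1
      · exact reach_dXY hxy R ha1 hb1 haIso hdd.symm
      · exact reach_dYX hxy R ha1 hb1 hbIso hdd.symm
    · -- d old, d' new
      obtain ⟨z, rfl⟩ := (mem_range_ι d).mpr h1
      rcases edge_cases hxy h2 with e2 | e2 <;> subst e2
      · exact reach_dXY hxy R ha1 hb1 haIso hdd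
      · exact reach_dYX hxy R ha1 hb1 hbIso hdd
    · -- both old
      obtain ⟨z, rfl⟩ := (mem_range_ι d).mpr h1
      obtain ⟨z', rfl⟩ := (mem_range_ι d').mpr h2
      exact soRel_mkRot_of_σ hxy R ha1 hb1 (soRel_σ_old R hdd)

/-! ### Counting: vertices and faces -/

lemma hso_new_x (hxy : G.Adj x y) (R : RotSys (HH G x y)) (z : (HH G x y).Dart) :
    ¬ soRel (σP R) (ιD G x y z) (dXY hxy) := by
  rintro ⟨n, hn⟩
  rw [σ_pow_ι] at hn
  exact ι_ne_dXY hxy _ hn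

lemma hso_new_y (hxy : G.Adj x y) (R : RotSys (HH G x y)) (z : (HH G x y).Dart) :
    ¬ soRel (σP R) (ιD G x y z) (dYX hxy) := by
  rintro ⟨n, hn⟩
  rw [σ_pow_ι] at hn
  exact ι_ne_dYX hxy _ hn

lemma hso_xy (hxy : G.Adj x y) (R : RotSys (HH G x y)) :
    ¬ soRel (σP R) (dXY hxy) (dYX hxy) := by
  rintro ⟨n, hn⟩
  rw [σ_pow_dXY] at hn
  exact dXY_ne_dYX hxy hn

lemma verts_lower (hxy : G.Adj x y) (R : RotSys (HH G x y)) :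
    nq R.rot + 2 ≤ nq (σP R) := by
  have hrel : Relator.LiftFun (soSetoid R.rot) (soSetoid (σP R) : Setoid G.Dart) (ιD G x y) (ιD G x y) := by
    rintro z z' ⟨n, hn⟩
    exact ⟨n, by rw [σ_pow_ι, hn]⟩
  let f : Quotient (soSetoid R.rot) → Quotient (soSetoid (σP R)) :=
    Quotient.map' (ιD G x y) hrel
  let j : Quotient (soSetoid R.rot) ⊕ Bool → Quotient (soSetoid (σP R)) :=
    Sum.elim f (fun t => if t then Quotient.mk'' (dYX hxy) else Quotient.mk'' (dXY hxy))
  have hinj : Function.Injective j := by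
    rintro (q | t) (q' | t') h
    · induction q using Quotient.inductionOn' with
      | h z =>
      induction q' using Quotient.inductionOn' with
      | h z' =>
        simp only [j, f, Sum.elim_inl, Quotient.map'_mk''] at h
        obtain ⟨n, hn⟩ := Quotient.exact' h
        rw [σ_pow_ι] at hn
        exact congrArg Sum.inl (Quotient.sound' ⟨n, (ιD G x y).injective hn⟩)
    · exfalso
      induction q using Quotient.inductionOn' with
      | h z =>
        cases t' <;> simp only [j, f, Sum.elim_inl, Sum.elim_inr, Quotient.map'_mk'',
          if_true, if_false, Bool.false_eq_true] at h
        · exact hso_new_x hxy R z (Quotient.exact' h)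
        · exact hso_new_y hxy R z (Quotient.exact' h)
    · exfalso
      induction q' using Quotient.inductionOn' with
      | h z =>
        cases t <;> simp only [j, f, Sum.elim_inl, Sum.elim_inr, Quotient.map'_mk'',
          if_true, if_false, Bool.false_eq_true] at h
        · exact hso_new_x hxy R z (soRel_symm (Quotient.exact' h))
        · exact hso_new_y hxy R z (soRel_symm (Quotient.exact' h))
    · cases t <;> cases t' <;> simp only [j, Sum.elim_inr, if_true, if_false,
        Bool.false_eq_true] at h ⊢
      · exfalso; exact hso_xy hxy R (Quotient.exact' h)
      · exfalso; exact hso_xy hxy R (soRel_symm (Quotient.exact' h))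
  have hcard := Nat.card_le_card_of_injective j hinj
  have hsum : Nat.card (Quotient (soSetoid R.rot) ⊕ Bool) = nq R.rot + 2 := by
    rw [Nat.card_sum]
    congr 1
    simp [Nat.card_eq_fintype_card]
  rw [hsum] at hcard
  exact hcard

lemma faces_lower (hxy : G.Adj x y) (R : RotSys (HH G x y)) :
    nq R.facePerm + 1 ≤ nq (φT R) := by
  have hrel : Relator.LiftFun (soSetoid R.facePerm) (soSetoid (φT R) : Setoid G.Dart) (ιD G x y) (ιD G x y) := by
    rintro z z' ⟨n, hn⟩
    exact ⟨n, by rw [φ_pow_ι, hn]⟩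
  let f : Quotient (soSetoid R.facePerm) → Quotient (soSetoid (φT R)) :=
    Quotient.map' (ιD G x y) hrel
  let j : Quotient (soSetoid R.facePerm) ⊕ Unit → Quotient (soSetoid (φT R)) :=
    Sum.elim f (fun _ => Quotient.mk'' (dXY hxy))
  have hnew : ∀ z : (HH G x y).Dart, ¬ soRel (φT R) (ιD G x y z) (dXY hxy) := by
    rintro z ⟨n, hn⟩
    rw [φ_pow_ι] at hn
    exact ι_ne_dXY hxy _ hn
  have hinj : Function.Injective j := by
    rintro (q | t) (q' | t') h
    · induction q using Quotient.inductionOn' with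
      | h z =>
      induction q' using Quotient.inductionOn' with
      | h z' =>
        simp only [j, f, Sum.elim_inl, Quotient.map'_mk''] at h
        obtain ⟨n, hn⟩ := Quotient.exact' h
        rw [φ_pow_ι] at hn
        exact congrArg Sum.inl (Quotient.sound' ⟨n, (ιD G x y).injective hn⟩)
    · exfalso
      induction q using Quotient.inductionOn' with
      | h z =>
        simp only [j, f, Sum.elim_inl, Sum.elim_inr, Quotient.map'_mk''] at h
        exact hnew z (Quotient.exact' h)
    · exfalso
      induction q' using Quotient.inductionOn' with
      | h z =>
        simp only [j, f, Sum.elim_inl, Sum.elim_inr, Quotient.map'_mk''] at h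
        exact hnew z (soRel_symm (Quotient.exact' h))
    · rfl
  have hcard := Nat.card_le_card_of_injective j hinj
  have hsum : Nat.card (Quotient (soSetoid R.facePerm) ⊕ Unit) = nq R.facePerm + 1 := by
    rw [Nat.card_sum]
    congr 1
    simp [Nat.card_eq_fintype_card]
  rw [hsum] at hcard
  exact hcard

/-! ### The face permutation of the modified rotation -/

lemma rev_swap (p q d : G.Dart) :
    dartRev G (Equiv.swap p q d) = Equiv.swap (dartRev G p) (dartRev G q) (dartRev G d) := by
  by_cases h1 : d = p
  · rw [h1, Equiv.swap_apply_left, Equiv.swap_apply_left]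
  by_cases h2 : d = q
  · rw [h2, Equiv.swap_apply_right, Equiv.swap_apply_right]
  · rw [Equiv.swap_apply_of_ne_of_ne h1 h2,
      Equiv.swap_apply_of_ne_of_ne (fun h => h1 ((dartRev G).injective h))
        (fun h => h2 ((dartRev G).injective h))]

lemma mk_facePerm (hxy : G.Adj x y) (R : RotSys (HH G x y)) (a b : G.Dart) :
    mkRot hxy R a b * dartRev G
      = φT R * Equiv.swap (dartRev G a) (dYX hxy) * Equiv.swap (dartRev G b) (dXY hxy) := by
  apply Equiv.ext
  intro d
  show mkRot hxy R a b (dartRev G d)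
      = σP R (dartRev G (Equiv.swap (dartRev G a) (dYX hxy)
          (Equiv.swap (dartRev G b) (dXY hxy) d)))
  rw [rev_swap, rev_swap, rev_rev, rev_rev, rev_dYX, rev_dXY]
  rfl

/-! ### Edge count -/

lemma edge_count (hxy : G.Adj x y) :
    Nat.card (HH G x y).edgeSet + 1 = Nat.card G.edgeSet := by
  rw [Nat.card_coe_set_eq, Nat.card_coe_set_eq]
  have h1 : (HH G x y).edgeSet = G.edgeSet \ {s(x, y)} := SimpleGraph.edgeSet_deleteEdges _
  rw [h1]
  exact Set.ncard_diff_singleton_add_one (G.mem_edgeSet.mpr hxy) (Set.toFinite _)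

/-! ### Counting: components -/

lemma cq_mk_eq {S : Set (Perm G.Dart)} {g : Perm G.Dart} (hg : g ∈ Subgroup.closure S)
    (d : G.Dart) :
    (Quotient.mk'' (g d) : MulAction.orbitRel.Quotient (Subgroup.closure S) G.Dart) =
      Quotient.mk'' d := by
  apply Quotient.sound'
  show (g d) ∈ MulAction.orbit (Subgroup.closure S) d
  exact ⟨⟨g, hg⟩, rfl⟩

lemma mem_closure_left (ρ : Perm G.Dart) :
    ρ ∈ Subgroup.closure {ρ, dartRev G} :=
  Subgroup.subset_closure (Set.mem_insert _ _)

lemma mem_closure_right (ρ : Perm G.Dart) :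
    dartRev G ∈ Subgroup.closure {ρ, dartRev G} :=
  Subgroup.subset_closure (Set.mem_insert_of_mem _ rfl)

lemma cq_σ (hxy : G.Adj x y) (R : RotSys (HH G x y)) {a b : G.Dart}
    (ha1 : a.fst = x) (hb1 : b.fst = y) (d : G.Dart) :
    (Quotient.mk'' (σP R d) :
        MulAction.orbitRel.Quotient (Subgroup.closure {mkRot hxy R a b, dartRev G}) G.Dart) =
      Quotient.mk'' d := by
  by_cases h1 : d = dXY hxy
  · rw [h1, σ_dXY]
  by_cases h2 : d = dYX hxy
  · rw [h2, σ_dYX]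
  by_cases h3 : d = a
  · have hs : σP R d = (mkRot hxy R a b ^ 2) d := by
      rw [h3, pow_two, Perm.mul_apply, K_a hxy R ha1 hb1, K_dxy hxy R hb1]
    rw [hs]
    exact cq_mk_eq (pow_mem (mem_closure_left _) 2) d
  by_cases h4 : d = b
  · have hs : σP R d = (mkRot hxy R a b ^ 2) d := by
      rw [h4, pow_two, Perm.mul_apply, K_b hxy R ha1, K_dyx hxy R ha1 hb1]
    rw [hs]
    exact cq_mk_eq (pow_mem (mem_closure_left _) 2) d
  · have hs : σP R d = mkRot hxy R a b d := (K_other hxy R h3 h4 h1 h2).symm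
    rw [hs]
    exact cq_mk_eq (mem_closure_left _) d

lemma cq_rev (hxy : G.Adj x y) (R : RotSys (HH G x y)) (a b : G.Dart) (d : G.Dart) :
    (Quotient.mk'' (dartRev G d) :
        MulAction.orbitRel.Quotient (Subgroup.closure {mkRot hxy R a b, dartRev G}) G.Dart) =
      Quotient.mk'' d :=
  cq_mk_eq (mem_closure_right _) d

lemma comp_wd (hxy : G.Adj x y) (R : RotSys (HH G x y)) {a b : G.Dart}
    (ha1 : a.fst = x) (hb1 : b.fst = y) (z z' : (HH G x y).Dart)
    (h : (MulAction.orbitRel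
        (Subgroup.closure {R.rot, dartRev (HH G x y)}) (HH G x y).Dart) z z') :
    (Quotient.mk'' (ιD G x y z) :
        MulAction.orbitRel.Quotient (Subgroup.closure {mkRot hxy R a b, dartRev G}) G.Dart) =
      Quotient.mk'' (ιD G x y z') := by
  rw [MulAction.orbitRel_apply] at h
  obtain ⟨⟨g, hg⟩, hgz⟩ := h
  have hgz' : g z' = z := hgz
  have claim : ∀ (g : Perm (HH G x y).Dart), g ∈ Subgroup.closure {R.rot, dartRev (HH G x y)} →
      ∀ w : (HH G x y).Dart,
      (Quotient.mk'' (ιD G x y (g w)) :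
        MulAction.orbitRel.Quotient (Subgroup.closure {mkRot hxy R a b, dartRev G}) G.Dart) =
        Quotient.mk'' (ιD G x y w) := by
    intro g hg
    induction hg using Subgroup.closure_induction with
    | mem u hu =>
      rcases hu with hu | hu
      · subst hu
        intro w
        have : ιD G x y (R.rot w) = σP R (ιD G x y w) := (σ_ι R w).symm
        rw [this]
        exact cq_σ hxy R ha1 hb1 _
      · rw [Set.mem_singleton_iff] at hu
        subst hu
        intro w
        have : ιD G x y (dartRev (HH G x y) w) = dartRev G (ιD G x y w) := (rev_ι w).symm
        rw [this]
        exact cq_rev hxy R a b _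
    | one => intro w; rfl
    | mul u v hu hv hup hvp =>
      intro w
      have : (u * v) w = u (v w) := rfl
      rw [this, hup (v w), hvp w]
    | inv u hu hup =>
      intro w
      have := hup (u⁻¹ w)
      rw [(Perm.eq_inv_iff_eq.mp rfl)] at this
      exact this.symm
  rw [← hgz']
  exact claim g hg z'

lemma comps_le_one (hxy : G.Adj x y) (R : RotSys (HH G x y)) {a b : G.Dart}
    (ha1 : a.fst = x) (hb1 : b.fst = y) :
    Nat.card (MulAction.orbitRel.Quotient
        (Subgroup.closure {mkRot hxy R a b, dartRev G}) G.Dart) ≤ R.numComps + 1 := by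
  classical
  let f : (HH G x y).Dart →
      MulAction.orbitRel.Quotient (Subgroup.closure {mkRot hxy R a b, dartRev G}) G.Dart :=
    fun z => Quotient.mk'' (ιD G x y z)
  let F0 : MulAction.orbitRel.Quotient
      (Subgroup.closure {R.rot, dartRev (HH G x y)}) (HH G x y).Dart →
      MulAction.orbitRel.Quotient (Subgroup.closure {mkRot hxy R a b, dartRev G}) G.Dart :=
    fun q => Quotient.liftOn' q f (fun z z' h => comp_wd hxy R ha1 hb1 z z' h)
  let F : (MulAction.orbitRel.Quotient
      (Subgroup.closure {R.rot, dartRev (HH G x y)}) (HH G x y).Dart) ⊕ Unit →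
      MulAction.orbitRel.Quotient (Subgroup.closure {mkRot hxy R a b, dartRev G}) G.Dart :=
    Sum.elim F0 (fun _ => Quotient.mk'' (dXY hxy))
  have hsurj : Function.Surjective F := by
    intro q
    induction q using Quotient.inductionOn' with
    | h d =>
      by_cases h : d.edge = s(x, y)
      · rcases edge_cases hxy h with h' | h'
        · exact ⟨Sum.inr (), by subst h'; rfl⟩
        · refine ⟨Sum.inr (), ?_⟩
          subst h'
          show Quotient.mk'' (dXY hxy) = _
          rw [show dYX hxy = dartRev G (dXY hxy) from rfl]
          exact (cq_rev hxy R a b _).symm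
      · obtain ⟨z, rfl⟩ := (mem_range_ι d).mpr h
        exact ⟨Sum.inl (Quotient.mk'' z), rfl⟩
  have hcard := Nat.card_le_card_of_surjective F hsurj
  have hsum : Nat.card ((MulAction.orbitRel.Quotient
      (Subgroup.closure {R.rot, dartRev (HH G x y)}) (HH G x y).Dart) ⊕ Unit)
      = R.numComps + 1 := by
    rw [Nat.card_sum]
    congr 1
    simp [Nat.card_eq_fintype_card]
  rw [hsum] at hcard
  exact hcard

lemma comps_le_zero (hxy : G.Adj x y) (R : RotSys (HH G x y)) {a b : G.Dart}
    (ha1 : a.fst = x) (hb1 : b.fst = y)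
    (hold : a.edge ≠ s(x, y) ∨ b.edge ≠ s(x, y)) :
    Nat.card (MulAction.orbitRel.Quotient
        (Subgroup.closure {mkRot hxy R a b, dartRev G}) G.Dart) ≤ R.numComps := by
  classical
  let f : (HH G x y).Dart →
      MulAction.orbitRel.Quotient (Subgroup.closure {mkRot hxy R a b, dartRev G}) G.Dart :=
    fun z => Quotient.mk'' (ιD G x y z)
  let F0 : MulAction.orbitRel.Quotient
      (Subgroup.closure {R.rot, dartRev (HH G x y)}) (HH G x y).Dart →
      MulAction.orbitRel.Quotient (Subgroup.closure {mkRot hxy R a b, dartRev G}) G.Dart :=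
    fun q => Quotient.liftOn' q f (fun z z' h => comp_wd hxy R ha1 hb1 z z' h)
  have hdxy : ∃ z : (HH G x y).Dart,
      (Quotient.mk'' (ιD G x y z) : MulAction.orbitRel.Quotient
        (Subgroup.closure {mkRot hxy R a b, dartRev G}) G.Dart) = Quotient.mk'' (dXY hxy) := by
    rcases hold with h | h
    · obtain ⟨za, hza⟩ := (mem_range_ι a).mpr h
      refine ⟨za, ?_⟩
      rw [hza, ← K_a hxy R ha1 hb1]
      exact (cq_mk_eq (mem_closure_left _) a).symm
    · obtain ⟨zb, hzb⟩ := (mem_range_ι b).mpr h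
      refine ⟨zb, ?_⟩
      rw [hzb]
      have h1 : (Quotient.mk'' b : MulAction.orbitRel.Quotient
          (Subgroup.closure {mkRot hxy R a b, dartRev G}) G.Dart) = Quotient.mk'' (dYX hxy) := by
        rw [← K_b hxy R ha1 (b := b)]
        exact (cq_mk_eq (mem_closure_left _) b).symm
      have h2 : (Quotient.mk'' (dYX hxy) : MulAction.orbitRel.Quotient
          (Subgroup.closure {mkRot hxy R a b, dartRev G}) G.Dart) = Quotient.mk'' (dXY hxy) := by
        rw [show dYX hxy = dartRev G (dXY hxy) from rfl]
        exact cq_rev hxy R a b _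
      rw [h1, h2]
  obtain ⟨zxy, hzxy⟩ := hdxy
  have hsurj : Function.Surjective F0 := by
    intro q
    induction q using Quotient.inductionOn' with
    | h d =>
      by_cases h : d.edge = s(x, y)
      · rcases edge_cases hxy h with h' | h'
        · exact ⟨Quotient.mk'' zxy, by subst h'; exact hzxy⟩
        · refine ⟨Quotient.mk'' zxy, ?_⟩
          subst h'
          show Quotient.mk'' (ιD G x y zxy) = _
          rw [hzxy, show dYX hxy = dartRev G (dXY hxy) from rfl]
          exact (cq_rev hxy R a b _).symm
      · obtain ⟨z, rfl⟩ := (mem_range_ι d).mpr h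
        exact ⟨Quotient.mk'' z, rfl⟩
  exact Nat.card_le_card_of_surjective F0 hsurj

/-! ### The master genus bound -/

lemma mkRS_genus (hxy : G.Adj x y) (R : RotSys (HH G x y)) (a b : G.Dart)
    (ha1 : a.fst = x) (hb1 : b.fst = y)
    (haIso : a = dXY hxy → ∀ z : (HH G x y).Dart, z.fst ≠ x)
    (hbIso : b = dYX hxy → ∀ z : (HH G x y).Dart, z.fst ≠ y)
    {m t cC cV cF : ℕ} (hR : R.genusLE m)
    (hC : Nat.card (MulAction.orbitRel.Quotient
        (Subgroup.closure {mkRot hxy R a b, dartRev G}) G.Dart) ≤ R.numComps + cC)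
    (hV : nq (σP R) ≤ nq (mkRot hxy R a b) + cV)
    (hF : nq (φT R) ≤ nq (mkRot hxy R a b * dartRev G) + cF)
    (hcost : cF + cV + 2 * cC ≤ 2 * t + 2) :
    (mkRS hxy R a b ha1 hb1 haIso hbIso).genusLE (m + t) := by
  have hRineq : 2 * R.numComps + Nat.card (HH G x y).edgeSet
      ≤ 2 * m + R.numFaces + R.numVerts := hR
  show 2 * (mkRS hxy R a b ha1 hb1 haIso hbIso).numComps + Nat.card G.edgeSet
      ≤ 2 * (m + t) + (mkRS hxy R a b ha1 hb1 haIso hbIso).numFaces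
        + (mkRS hxy R a b ha1 hb1 haIso hbIso).numVerts
  have e1 : (mkRS hxy R a b ha1 hb1 haIso hbIso).numVerts = nq (mkRot hxy R a b) :=
    nq_eq_card_orbitRel _
  have e2 : (mkRS hxy R a b ha1 hb1 haIso hbIso).numFaces
      = nq (mkRot hxy R a b * dartRev G) := nq_eq_card_orbitRel _
  have e3 : (mkRS hxy R a b ha1 hb1 haIso hbIso).numComps
      = Nat.card (MulAction.orbitRel.Quotient
        (Subgroup.closure {mkRot hxy R a b, dartRev G}) G.Dart) := rfl
  have e4 : R.numVerts = nq R.rot := nq_eq_card_orbitRel _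
  have e5 : R.numFaces = nq R.facePerm := nq_eq_card_orbitRel _
  have e6 := edge_count hxy
  have e7 := verts_lower hxy R
  have e8 := faces_lower hxy R
  rw [e1, e2, e3]
  rw [e4, e5] at hRineq
  omega

/-! ### Adding an edge raises the genus by at most one -/

lemma add_edge (hxy : G.Adj x y) (R : RotSys (HH G x y)) (m : ℕ) (hR : R.genusLE m) :
    GenusLE G (m + 1) := by
  have hmkeq : ∀ a b : G.Dart, mkRot hxy R a b
      = σP R * Equiv.swap a (dXY hxy) * Equiv.swap b (dYX hxy) := fun _ _ => rfl
  by_cases hax : ∃ z : (HH G x y).Dart, z.fst = x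
  · by_cases hby : ∃ z : (HH G x y).Dart, z.fst = y
    · obtain ⟨za, hza⟩ := hax
      obtain ⟨zb, hzb⟩ := hby
      have ha1 : (ιD G x y za).fst = x := hza
      have hb1 : (ιD G x y zb).fst = y := hzb
      have haIso : ιD G x y za = dXY hxy → ∀ z : (HH G x y).Dart, z.fst ≠ x :=
        fun h => absurd h (ι_ne_dXY hxy za)
      have hbIso : ιD G x y zb = dYX hxy → ∀ z : (HH G x y).Dart, z.fst ≠ y :=
        fun h => absurd h (ι_ne_dYX hxy zb)
      have hCpf := comps_le_zero hxy R ha1 hb1 (Or.inl (ι_edge_ne za))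
      have hVpf : nq (σP R) ≤ nq (mkRot hxy R (ιD G x y za) (ιD G x y zb)) + 2 := by
        have s1 : nq (σP R) ≤ nq (σP R * Equiv.swap (ιD G x y za) (dXY hxy)) + 1 :=
          nq_le_mul_swap _ _ _ (ι_ne_dXY hxy za)
        have s2 : nq (σP R * Equiv.swap (ιD G x y za) (dXY hxy))
            ≤ nq (σP R * Equiv.swap (ιD G x y za) (dXY hxy)
              * Equiv.swap (ιD G x y zb) (dYX hxy)) + 1 :=
          nq_le_mul_swap _ _ _ (ι_ne_dYX hxy zb)
        rw [hmkeq]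
        omega
      have hFpf : nq (φT R)
          ≤ nq (mkRot hxy R (ιD G x y za) (ιD G x y zb) * dartRev G) + 2 := by
        rw [mk_facePerm hxy R _ _, rev_ι, rev_ι]
        have s1 : nq (φT R)
            ≤ nq (φT R * Equiv.swap (ιD G x y (dartRev (HH G x y) za)) (dYX hxy)) + 1 :=
          nq_le_mul_swap _ _ _ (ι_ne_dYX hxy _)
        have s2 : nq (φT R * Equiv.swap (ιD G x y (dartRev (HH G x y) za)) (dYX hxy))
            ≤ nq (φT R * Equiv.swap (ιD G x y (dartRev (HH G x y) za)) (dYX hxy)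
              * Equiv.swap (ιD G x y (dartRev (HH G x y) zb)) (dXY hxy)) + 1 :=
          nq_le_mul_swap _ _ _ (ι_ne_dXY hxy _)
        omega
      exact ⟨mkRS hxy R _ _ ha1 hb1 haIso hbIso,
        mkRS_genus hxy R _ _ ha1 hb1 haIso hbIso (t := 1) (cC := 0) hR
          (by omega) hVpf hFpf (by omega)⟩
    · obtain ⟨za, hza⟩ := hax
      have ha1 : (ιD G x y za).fst = x := hza
      have hb1 : (dYX hxy).fst = y := rfl
      have haIso : ιD G x y za = dXY hxy → ∀ z : (HH G x y).Dart, z.fst ≠ x :=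
        fun h => absurd h (ι_ne_dXY hxy za)
      have hbIso : dYX hxy = dYX hxy → ∀ z : (HH G x y).Dart, z.fst ≠ y :=
        fun _ z hz => hby ⟨z, hz⟩
      have hCpf := comps_le_zero hxy R ha1 hb1 (Or.inl (ι_edge_ne za))
      have hVpf : nq (σP R) ≤ nq (mkRot hxy R (ιD G x y za) (dYX hxy)) + 1 := by
        have s1 : nq (σP R) ≤ nq (σP R * Equiv.swap (ιD G x y za) (dXY hxy)) + 1 :=
          nq_le_mul_swap _ _ _ (ι_ne_dXY hxy za)
        have s2 : nq (σP R * Equiv.swap (ιD G x y za) (dXY hxy)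
            * Equiv.swap (dYX hxy) (dYX hxy))
            = nq (σP R * Equiv.swap (ιD G x y za) (dXY hxy)) := nq_mul_swap_self _ _
        rw [hmkeq]
        omega
      have hFpf : nq (φT R)
          ≤ nq (mkRot hxy R (ιD G x y za) (dYX hxy) * dartRev G) + 1 := by
        rw [mk_facePerm hxy R _ _, rev_ι, rev_dYX]
        have s1 : nq (φT R)
            ≤ nq (φT R * Equiv.swap (ιD G x y (dartRev (HH G x y) za)) (dYX hxy)) + 1 :=
          nq_le_mul_swap _ _ _ (ι_ne_dYX hxy _)
        have s2 : nq (φT R * Equiv.swap (ιD G x y (dartRev (HH G x y) za)) (dYX hxy)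
            * Equiv.swap (dXY hxy) (dXY hxy))
            = nq (φT R * Equiv.swap (ιD G x y (dartRev (HH G x y) za)) (dYX hxy)) :=
          nq_mul_swap_self _ _
        omega
      exact ⟨mkRS hxy R _ _ ha1 hb1 haIso hbIso,
        mkRS_genus hxy R _ _ ha1 hb1 haIso hbIso (t := 1) (cC := 0) hR
          (by omega) hVpf hFpf (by omega)⟩
  · by_cases hby : ∃ z : (HH G x y).Dart, z.fst = y
    · obtain ⟨zb, hzb⟩ := hby
      have ha1 : (dXY hxy).fst = x := rfl
      have hb1 : (ιD G x y zb).fst = y := hzb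
      have haIso : dXY hxy = dXY hxy → ∀ z : (HH G x y).Dart, z.fst ≠ x :=
        fun _ z hz => hax ⟨z, hz⟩
      have hbIso : ιD G x y zb = dYX hxy → ∀ z : (HH G x y).Dart, z.fst ≠ y :=
        fun h => absurd h (ι_ne_dYX hxy zb)
      have hCpf := comps_le_zero hxy R ha1 hb1 (Or.inr (ι_edge_ne zb))
      have hVpf : nq (σP R) ≤ nq (mkRot hxy R (dXY hxy) (ιD G x y zb)) + 1 := by
        have s1 : nq (σP R * Equiv.swap (dXY hxy) (dXY hxy)) = nq (σP R) :=
          nq_mul_swap_self _ _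
        have s2 : nq (σP R * Equiv.swap (dXY hxy) (dXY hxy))
            ≤ nq (σP R * Equiv.swap (dXY hxy) (dXY hxy)
              * Equiv.swap (ιD G x y zb) (dYX hxy)) + 1 :=
          nq_le_mul_swap _ _ _ (ι_ne_dYX hxy zb)
        rw [hmkeq]
        omega
      have hFpf : nq (φT R)
          ≤ nq (mkRot hxy R (dXY hxy) (ιD G x y zb) * dartRev G) + 1 := by
        rw [mk_facePerm hxy R _ _, rev_ι, rev_dXY]
        have s1 : nq (φT R * Equiv.swap (dYX hxy) (dYX hxy)) = nq (φT R) :=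
          nq_mul_swap_self _ _
        have s2 : nq (φT R * Equiv.swap (dYX hxy) (dYX hxy))
            ≤ nq (φT R * Equiv.swap (dYX hxy) (dYX hxy)
              * Equiv.swap (ιD G x y (dartRev (HH G x y) zb)) (dXY hxy)) + 1 :=
          nq_le_mul_swap _ _ _ (ι_ne_dXY hxy _)
        omega
      exact ⟨mkRS hxy R _ _ ha1 hb1 haIso hbIso,
        mkRS_genus hxy R _ _ ha1 hb1 haIso hbIso (t := 1) (cC := 0) hR
          (by omega) hVpf hFpf (by omega)⟩
    · have ha1 : (dXY hxy).fst = x := rfl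
      have hb1 : (dYX hxy).fst = y := rfl
      have haIso : dXY hxy = dXY hxy → ∀ z : (HH G x y).Dart, z.fst ≠ x :=
        fun _ z hz => hax ⟨z, hz⟩
      have hbIso : dYX hxy = dYX hxy → ∀ z : (HH G x y).Dart, z.fst ≠ y :=
        fun _ z hz => hby ⟨z, hz⟩
      have hCpf := comps_le_one hxy R ha1 hb1
      have hVpf : nq (σP R) ≤ nq (mkRot hxy R (dXY hxy) (dYX hxy)) + 0 := by
        have s1 : nq (σP R * Equiv.swap (dXY hxy) (dXY hxy)) = nq (σP R) :=
          nq_mul_swap_self _ _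
        have s2 : nq (σP R * Equiv.swap (dXY hxy) (dXY hxy)
            * Equiv.swap (dYX hxy) (dYX hxy))
            = nq (σP R * Equiv.swap (dXY hxy) (dXY hxy)) := nq_mul_swap_self _ _
        rw [hmkeq]
        omega
      have hFpf : nq (φT R)
          ≤ nq (mkRot hxy R (dXY hxy) (dYX hxy) * dartRev G) + 0 := by
        rw [mk_facePerm hxy R _ _, rev_dXY, rev_dYX]
        have s1 : nq (φT R * Equiv.swap (dYX hxy) (dYX hxy)) = nq (φT R) :=
          nq_mul_swap_self _ _
        have s2 : nq (φT R * Equiv.swap (dYX hxy) (dYX hxy)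
            * Equiv.swap (dXY hxy) (dXY hxy))
            = nq (φT R * Equiv.swap (dYX hxy) (dYX hxy)) := nq_mul_swap_self _ _
        omega
      exact ⟨mkRS hxy R _ _ ha1 hb1 haIso hbIso,
        mkRS_genus hxy R _ _ ha1 hb1 haIso hbIso (t := 1) (cC := 1) hR
          (by omega) hVpf hFpf (by omega)⟩

/-! ### Adding an edge inside an alternating face keeps the genus -/

lemma add_edge_alt (hxy : G.Adj x y) (R : RotSys (HH G x y)) (k : ℕ)
    (hR : R.genusLE k) (halt : R.altFace x y) : GenusLE G k := by
  obtain ⟨d₀, aa, bb, cc, h0a, hab, hbc, hcp, hf1, hf2, hf3, hf4⟩ := halt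
  set z1 : (HH G x y).Dart := (R.facePerm ^ aa) d₀ with hz1def
  set za : (HH G x y).Dart := R.rot⁻¹ d₀ with hzadef
  set zb : (HH G x y).Dart := R.rot⁻¹ z1 with hzbdef
  have hza_fst : za.fst = x := by
    have h := R.fst_rot za
    rw [hzadef, (Perm.eq_inv_iff_eq.mp rfl)] at h
    rw [hzadef, ← h, hf1]
  have hzb_fst : zb.fst = y := by
    have h := R.fst_rot zb
    rw [hzbdef, (Perm.eq_inv_iff_eq.mp rfl)] at h
    rw [hzbdef, ← h]
    exact hf2
  set a : G.Dart := ιD G x y za with hadef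
  set b : G.Dart := ιD G x y zb with hbdef
  have ha1 : a.fst = x := hza_fst
  have hb1 : b.fst = y := hzb_fst
  have haIso : a = dXY hxy → ∀ z : (HH G x y).Dart, z.fst ≠ x :=
    fun h => absurd h (ι_ne_dXY hxy za)
  have hbIso : b = dYX hxy → ∀ z : (HH G x y).Dart, z.fst ≠ y :=
    fun h => absurd h (ι_ne_dYX hxy zb)
  -- the two insertion points are cofacial
  have hfa : φT R (dartRev G a) = ιD G x y d₀ := by
    show σP R (dartRev G (dartRev G a)) = _
    rw [rev_rev, hadef, σ_ι, hzadef, (Perm.eq_inv_iff_eq.mp rfl)]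
  have hfb : φT R (dartRev G b) = ιD G x y z1 := by
    show σP R (dartRev G (dartRev G b)) = _
    rw [rev_rev, hbdef, σ_ι, hzbdef, (Perm.eq_inv_iff_eq.mp rfl)]
  have cof : soRel (φT R) (dartRev G b) (dartRev G a) := by
    have s1 : soRel (φT R) (dartRev G a) (ιD G x y d₀) := ⟨1, by rw [pow_one]; exact hfa⟩
    have s2 : soRel (φT R) (ιD G x y d₀) (ιD G x y z1) :=
      ⟨aa, by rw [φ_pow_ι, hz1def]⟩
    have s3 : soRel (φT R) (dartRev G b) (ιD G x y z1) := ⟨1, by rw [pow_one]; exact hfb⟩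
    exact soRel_trans s3 (soRel_symm (soRel_trans s1 s2))
  -- the auxiliary permutation after the first face swap
  set ψ : Perm G.Dart := φT R * Equiv.swap (dartRev G a) (dYX hxy) with hψdef
  have hne_ra_dYX : dartRev G a ≠ dYX hxy := by
    rw [hadef, rev_ι]
    exact ι_ne_dYX hxy _
  have hne_ra_dXY : dartRev G a ≠ dXY hxy := by
    rw [hadef, rev_ι]
    exact ι_ne_dXY hxy _
  have hne_rb_dXY : dartRev G b ≠ dXY hxy := by
    rw [hbdef, rev_ι]
    exact ι_ne_dXY hxy _
  have hψ1 : ψ (dartRev G a) = dXY hxy := by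
    rw [hψdef, Perm.mul_apply, Equiv.swap_apply_left, φ_dYX]
  have hψ2 : ψ (dXY hxy) = dYX hxy := by
    rw [hψdef, Perm.mul_apply,
      Equiv.swap_apply_of_ne_of_ne (Ne.symm hne_ra_dXY) (dXY_ne_dYX hxy), φ_dXY]
  have hψ3 : ψ (dYX hxy) = φT R (dartRev G a) := by
    rw [hψdef, Perm.mul_apply, Equiv.swap_apply_right]
  have so_ψ_φ : ∀ d, soRel ψ d (φT R d) := by
    intro d
    by_cases h1 : d = dartRev G a
    · refine ⟨3, ?_⟩
      have h3 : (ψ ^ 3) d = ψ (ψ (ψ d)) := by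
        rw [pow_succ, pow_succ, pow_one, Perm.mul_apply, Perm.mul_apply]
      rw [h3, h1, hψ1, hψ2, hψ3]
    by_cases h2 : d = dYX hxy
    · rw [h2, φ_dYX]
      exact soRel_symm ⟨1, by rw [pow_one]; exact hψ2⟩
    by_cases h3 : d = dXY hxy
    · rw [h3, φ_dXY]
      exact ⟨1, by rw [pow_one]; exact hψ2⟩
    · refine ⟨1, ?_⟩
      rw [pow_one, hψdef, Perm.mul_apply, Equiv.swap_apply_of_ne_of_ne h1 h2]
  have so_cof : soRel ψ (dartRev G b) (dXY hxy) := by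
    have s1 : soRel ψ (dartRev G b) (dartRev G a) := soRel_mono so_ψ_φ cof
    exact soRel_trans s1 ⟨1, by rw [pow_one]; exact hψ1⟩
  have hCpf := comps_le_zero hxy R ha1 hb1 (Or.inl (ι_edge_ne za))
  have hVpf : nq (σP R) ≤ nq (mkRot hxy R a b) + 2 := by
    have s1 : nq (σP R) ≤ nq (σP R * Equiv.swap a (dXY hxy)) + 1 :=
      nq_le_mul_swap _ _ _ (by rw [hadef]; exact ι_ne_dXY hxy za)
    have s2 : nq (σP R * Equiv.swap a (dXY hxy))
        ≤ nq (σP R * Equiv.swap a (dXY hxy) * Equiv.swap b (dYX hxy)) + 1 :=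
      nq_le_mul_swap _ _ _ (by rw [hbdef]; exact ι_ne_dYX hxy zb)
    have hmk : mkRot hxy R a b
        = σP R * Equiv.swap a (dXY hxy) * Equiv.swap b (dYX hxy) := rfl
    rw [hmk]
    omega
  have hFpf : nq (φT R) ≤ nq (mkRot hxy R a b * dartRev G) + 0 := by
    rw [mk_facePerm hxy R a b]
    have s1 : nq (φT R) ≤ nq ψ + 1 := by
      rw [hψdef]
      exact nq_le_mul_swap _ _ _ hne_ra_dYX
    have s2 : nq ψ + 1 ≤ nq (ψ * Equiv.swap (dartRev G b) (dXY hxy)) :=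
      nq_mul_swap_ge hne_rb_dXY so_cof
    have hrw : φT R * Equiv.swap (dartRev G a) (dYX hxy)
        * Equiv.swap (dartRev G b) (dXY hxy) = ψ * Equiv.swap (dartRev G b) (dXY hxy) := by
      rw [hψdef]
    rw [hrw]
    omega
  refine ⟨mkRS hxy R a b ha1 hb1 haIso hbIso, ?_⟩
  have := mkRS_genus hxy R a b ha1 hb1 haIso hbIso (t := 0) (cC := 0) hR
    (by omega) hVpf hFpf (by omega)
  simpa using this

end Graph

end AltProof
open AltPaper in
/-- first half of Lemma lm-alt-jump: If `G` is an obstruction for the class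
`A^k_{xy}` and `G` does not embed in the orientable surface of genus `k`, then
`xy ∉ E(G)` and `G` is a minimal (topological) obstruction for that surface. -/
theorem statement_14 {V : Type*} [Fintype V] (G : SimpleGraph V) (x y : V) (k : ℕ)
    (hk : 1 ≤ k) (hobs : MinimalNotAk G x y k) (hne : ¬ GenusLE G k) :
    ¬ G.Adj x y ∧ ∀ e ∈ G.edgeSet, GenusLE (G.deleteEdges {e}) k := by
  constructor
  · intro hxy
    have he : s(x, y) ∈ G.edgeSet := G.mem_edgeSet.mpr hxy
    have hAk := hobs.2.1 _ he
    rcases hAk with ⟨R, hR⟩ | ⟨R, hR, halt⟩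
    · apply hne
      have h := AltProof.add_edge hxy R (k - 1) hR
      have hk1 : k - 1 + 1 = k := by omega
      rwa [hk1] at h
    · exact hne (AltProof.add_edge_alt hxy R k hR halt)
  · intro e he
    have hAk := hobs.2.1 e he
    rcases hAk with ⟨R, hR⟩ | ⟨R, hR, _⟩
    · refine ⟨R, ?_⟩
      have h1 : 2 * R.numComps + Nat.card (G.deleteEdges {e}).edgeSet
          ≤ 2 * (k - 1) + R.numFaces + R.numVerts := hR
      show 2 * R.numComps + Nat.card (G.deleteEdges {e}).edgeSet
          ≤ 2 * k + R.numFaces + R.numVerts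
      omega
    · exact ⟨R, hR⟩
end
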